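/- Let A and B be zero-one matrices of sizes m×m and n×n respectively, and let B#A denote the (m+n)×(m+n) block matrix with B in the top-left block, A in the bottom-right block, and all-ones matrices J^{n,m}, J^{m,n} in the off-diagonal blocks. Then the (m+n)-th q-rook number of B#A satisfies R_{m+n}^{B#A}(q) = Σ_{i=0}^{min(m,n)} R_{m−i}^{A}(q) · R_{n−i}^{B^↻}(q) · ([i]!_q)² · q^{−i²}, where B^↻ is B rotated 180 degrees (B^↻_{i,j} = B_{n−i+1,n−j+1}). -/

import Mathlib

open Finset

/-- A board: the set of one-entries (cells) of a zero-one matrix, as (row, column) pairs. -/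
abbrev Board := Finset (ℕ × ℕ)

/-- The full `m × n` grid of cells. -/
def grid (m n : ℕ) : Board := Finset.range m ×ˢ Finset.range n

/-- The (non-taking) rook configurations on the board `A` with `k` rooks. -/
def rookConfigs (A : Board) (k : ℕ) : Finset Board :=
  A.powerset.filter fun C =>
    C.card = k ∧ ∀ c ∈ C, ∀ c' ∈ C, c ≠ c' → c.1 ≠ c'.1 ∧ c.2 ≠ c'.2

/-- `invStat m n C`: the number of (not necessarily positive) cells of an `m × n` matrix
having no rook of the configuration `C` weakly to the right in the same row nor weakly
below in the same column. -/
def invStat (m n : ℕ) (C : Board) : ℕ :=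
  ((grid m n).filter fun a =>
    (∀ c ∈ C, c.1 = a.1 → c.2 < a.2) ∧ (∀ c ∈ C, c.2 = a.2 → c.1 < a.1)).card

/-- The `k`-th `q`-rook number of a board `A` of ambient matrix size `m × n`. -/
def qRook {F : Type*} [CommSemiring F] (q : F) (m n : ℕ) (A : Board) (k : ℕ) : F :=
  ∑ C ∈ rookConfigs A k, q ^ invStat m n C

/-- The `q`-analogue `[x]_q = 1 + q + ⋯ + q^(x-1)`. -/
def qInt {F : Type*} [CommSemiring F] (q : F) (x : ℕ) : F := ∑ i ∈ Finset.range x, q ^ i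

/-- The `q`-factorial `[n]!_q = [1]_q [2]_q ⋯ [n]_q`. -/
def qFact {F : Type*} [CommSemiring F] (q : F) (n : ℕ) : F := ∏ i ∈ Finset.range n, qInt q (i + 1)

/-- The `q`-Stirling numbers `S_{n,k}(q)` of Garsia and Remmel. -/
def qStirling {F : Type*} [CommSemiring F] (q : F) : ℕ → ℕ → F
  | 0, 0 => 1
  | 0, _ + 1 => 0
  | n + 1, k => (if k = 0 then 0 else q ^ (k - 1) * qStirling q n (k - 1)) + qInt q k * qStirling q n k

/-- Stirling numbers of the second kind. -/
def stirling2 : ℕ → ℕ → ℕ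
  | 0, 0 => 1
  | 0, _ + 1 => 0
  | n + 1, k => (if k = 0 then 0 else stirling2 n (k - 1)) + k * stirling2 n k

/-- The board `A` covers the rook configuration of the permutation `π`
(a rook at `(i, π i)` for every row `i`, zero-indexed). -/
def Covers {n : ℕ} (A : Board) (π : Equiv.Perm (Fin n)) : Prop :=
  ∀ i : Fin n, ((i : ℕ), (π i : ℕ)) ∈ A

/-- `bruhatRank π i j` is the number of rooks of `π` weakly north-east of cell `(i,j)`,
i.e. `|{a ≤ i : π a ≥ j}|`. -/
def bruhatRank {n : ℕ} (π : Equiv.Perm (Fin n)) (i j : Fin n) : ℕ :=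
  (Finset.univ.filter fun a : Fin n => a ≤ i ∧ j ≤ π a).card

/-- Bruhat order on the symmetric group, via the standard (Ehresmann) rank criterion. -/
def BruhatLE {n : ℕ} (u w : Equiv.Perm (Fin n)) : Prop :=
  ∀ i j : Fin n, bruhatRank u i j ≤ bruhatRank w i j


instance {n : ℕ} (A : Board) (π : Equiv.Perm (Fin n)) : Decidable (Covers A π) :=
  inferInstanceAs (Decidable (∀ i : Fin n, ((i : ℕ), (π i : ℕ)) ∈ A))

instance {n : ℕ} (u w : Equiv.Perm (Fin n)) : Decidable (BruhatLE u w) :=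
  inferInstanceAs (Decidable (∀ i j : Fin n, bruhatRank u i j ≤ bruhatRank w i j))

/-- The number of inversions of a permutation (= its Coxeter length). -/
def inversions {n : ℕ} (π : Equiv.Perm (Fin n)) : ℕ :=
  (Finset.univ.filter fun p : Fin n × Fin n => p.1 < p.2 ∧ π p.2 < π p.1).card

/-- A right-aligned Ferrers matrix inside the `n × n` grid: every one-entry has one-entries
(weakly) to its right in the grid and above it. -/
def IsRightFerrers (n : ℕ) (A : Board) : Prop :=
  A ⊆ grid n n ∧ ∀ i j i' j' : ℕ, (i, j) ∈ A → i' ≤ i → j ≤ j' → j' < n → (i', j') ∈ A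

/-- A left-aligned Ferrers matrix inside the `n × n` grid. -/
def IsLeftFerrers (n : ℕ) (A : Board) : Prop :=
  A ⊆ grid n n ∧ ∀ i j i' j' : ℕ, (i, j) ∈ A → i' ≤ i → j' ≤ j → (i', j') ∈ A

/-- A right-aligned skew Ferrers matrix: an entrywise difference `λ - μ` of right-aligned
Ferrers matrices with `μ ≤ λ`. -/
def IsRightSkewFerrers (n : ℕ) (B : Board) : Prop :=
  ∃ L M : Board, IsRightFerrers n L ∧ IsRightFerrers n M ∧ M ⊆ L ∧ B = L \ M

/-- A left-aligned skew Ferrers matrix. -/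
def IsLeftSkewFerrers (n : ℕ) (B : Board) : Prop :=
  ∃ L M : Board, IsLeftFerrers n L ∧ IsLeftFerrers n M ∧ M ⊆ L ∧ B = L \ M

/-- `H` is the right hull of `π`: the smallest right-aligned skew Ferrers matrix covering `π`. -/
def IsRightHull {n : ℕ} (π : Equiv.Perm (Fin n)) (H : Board) : Prop :=
  IsRightSkewFerrers n H ∧ Covers H π ∧
    ∀ B : Board, IsRightSkewFerrers n B → Covers B π → H ⊆ B

/-- `H` is the left hull of `π`: the smallest left-aligned skew Ferrers matrix covering `π`. -/
def IsLeftHull {n : ℕ} (π : Equiv.Perm (Fin n)) (H : Board) : Prop :=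
  IsLeftSkewFerrers n H ∧ Covers H π ∧
    ∀ B : Board, IsLeftSkewFerrers n B → Covers B π → H ⊆ B

/-- `π` contains the pattern `σ`. -/
def ContainsPattern {n m : ℕ} (π : Equiv.Perm (Fin n)) (σ : Equiv.Perm (Fin m)) : Prop :=
  ∃ f : Fin m → Fin n, StrictMono f ∧ ∀ a b : Fin m, σ a < σ b ↔ π (f a) < π (f b)

/-- The pattern 4231 (one-line notation, here zero-indexed). -/
def p4231 : Equiv.Perm (Fin 4) := ⟨![3,1,2,0], ![3,1,2,0], by decide, by decide⟩
/-- The pattern 35142. -/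
def p35142 : Equiv.Perm (Fin 5) := ⟨![2,4,0,3,1], ![2,4,0,3,1], by decide, by decide⟩
/-- The pattern 42513. -/
def p42513 : Equiv.Perm (Fin 5) := ⟨![3,1,4,0,2], ![3,1,4,0,2], by decide, by decide⟩
/-- The pattern 351624. -/
def p351624 : Equiv.Perm (Fin 6) := ⟨![2,4,0,5,1,3], ![2,4,0,5,1,3], by decide, by decide⟩

/-- `π` avoids the four patterns 4231, 35142, 42513 and 351624. -/
def AvoidsThePatterns {n : ℕ} (π : Equiv.Perm (Fin n)) : Prop :=
  ¬ ContainsPattern π p4231 ∧ ¬ ContainsPattern π p35142 ∧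
    ¬ ContainsPattern π p42513 ∧ ¬ ContainsPattern π p351624

/-- Rotating an `m × n` board by 180 degrees. -/
def rot180 (m n : ℕ) (A : Board) : Board := A.image fun c => (m - 1 - c.1, n - 1 - c.2)

/-- Flipping an `m`-row board upside down. -/
def flipud (m : ℕ) (A : Board) : Board := A.image fun c => (m - 1 - c.1, c.2)

/-- The block matrix `B # A` with `B` (of size `nB × nB`) in the top-left corner, `A`
(of size `mA × mA`) in the bottom-right corner, and all-ones off-diagonal blocks. -/
def blockSharp (nB mA : ℕ) (B A : Board) : Board :=
  B ∪ Finset.range nB ×ˢ Finset.Ico nB (nB + mA) ∪ Finset.Ico nB (nB + mA) ×ˢ Finset.range nB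
    ∪ A.image fun c => (c.1 + nB, c.2 + nB)

/-- The 180-degree rotation of a permutation of `Fin n`: `π^↻ (i) = n - 1 - π (n - 1 - i)`. -/
def rot180Perm {n : ℕ} (π : Equiv.Perm (Fin n)) : Equiv.Perm (Fin n) :=
  (Fin.revPerm.trans π).trans Fin.revPerm

/-- The statistic `neg(π) = |{i ∈ [n+1, 2n] : π i ≤ n}|` (one-indexed) on `S_{2n}`. -/
def negStat (n : ℕ) (π : Equiv.Perm (Fin (2 * n))) : ℕ :=
  (Finset.univ.filter fun i : Fin (2 * n) => n ≤ (i : ℕ) ∧ (π i : ℕ) < n).card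

/-- `RB^M (q, t) = Σ_{π ∈ 𝔖ₙᴮ ∩ 𝔖(M)} q^{inv π} t^{neg π}` over rotationally symmetric
permutations of `S_{2n}` covered by the `2n × 2n` board `M`. -/
def RB {F : Type*} [CommSemiring F] (q t : F) (n : ℕ) (M : Board) : F :=
  ∑ π ∈ Finset.univ.filter fun π : Equiv.Perm (Fin (2 * n)) => rot180Perm π = π ∧ Covers M π,
    q ^ inversions π * t ^ negStat n π

/-- The triangular board `T_m` with ones on and above the secondary diagonal. -/
def Tboard (m : ℕ) : Board := (grid m m).filter fun c => c.1 + c.2 < m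

namespace QRB
open Finset

/-- Matchings between two finite sets of (row indices, column indices). -/
def matchings (R S : Finset ℕ) : Finset Board :=
  (R ×ˢ S).powerset.filter fun M =>
    M.card = R.card ∧ M.image Prod.fst = R ∧ M.image Prod.snd = S

/-- Inversion-type statistic on a set of cells. -/
def invM (M : Board) : ℕ :=
  ((M ×ˢ M).filter fun p => p.2.1 < p.1.1 ∧ p.1.2 < p.2.2).card

def freeR (k : ℕ) (C : Board) : Finset ℕ := (range k).filter fun r => ∀ c ∈ C, c.1 ≠ r
def freeC (k : ℕ) (C : Board) : Finset ℕ := (range k).filter fun s => ∀ c ∈ C, c.2 ≠ s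

def shiftB (n : ℕ) (C : Board) : Board := C.image fun c => (c.1 + n, c.2 + n)

def combine (n : ℕ) (CB CA MBL MTR : Board) : Board :=
  CB ∪ MBL ∪ MTR ∪ shiftB n CA

lemma mem_rookConfigs {A : Board} {k : ℕ} {C : Board} :
    C ∈ rookConfigs A k ↔ C ⊆ A ∧ C.card = k ∧
      ∀ c ∈ C, ∀ c' ∈ C, c ≠ c' → c.1 ≠ c'.1 ∧ c.2 ≠ c'.2 := by
  simp [rookConfigs, Finset.mem_filter, Finset.mem_powerset, and_assoc]

lemma rowInj {C : Board} (na : ∀ c ∈ C, ∀ c' ∈ C, c ≠ c' → c.1 ≠ c'.1 ∧ c.2 ≠ c'.2) :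
    ∀ p ∈ C, ∀ q ∈ C, p.1 = q.1 → p = q := by
  intro p hp q hq h
  by_contra hne
  exact (na p hp q hq hne).1 h

lemma colInj {C : Board} (na : ∀ c ∈ C, ∀ c' ∈ C, c ≠ c' → c.1 ≠ c'.1 ∧ c.2 ≠ c'.2) :
    ∀ p ∈ C, ∀ q ∈ C, p.2 = q.2 → p = q := by
  intro p hp q hq h
  by_contra hne
  exact (na p hp q hq hne).2 h

lemma mem_matchings {R S : Finset ℕ} {M : Board} :
    M ∈ matchings R S ↔ M ⊆ R ×ˢ S ∧ M.card = R.card ∧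
      M.image Prod.fst = R ∧ M.image Prod.snd = S := by
  simp [matchings, Finset.mem_filter, Finset.mem_powerset, and_assoc]

lemma matchings_rowInj {R S : Finset ℕ} {M : Board} (h : M ∈ matchings R S) :
    ∀ p ∈ M, ∀ q ∈ M, p.1 = q.1 → p = q := by
  rw [mem_matchings] at h
  have hinj : Set.InjOn Prod.fst (M : Set (ℕ × ℕ)) := by
    apply Finset.injOn_of_card_image_eq
    rw [h.2.2.1, h.2.1]
  intro p hp q hq hpq
  exact hinj (by simpa using hp) (by simpa using hq) hpq

lemma matchings_colInj {R S : Finset ℕ} {M : Board} (hc : S.card = R.card)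
    (h : M ∈ matchings R S) : ∀ p ∈ M, ∀ q ∈ M, p.2 = q.2 → p = q := by
  rw [mem_matchings] at h
  have hinj : Set.InjOn Prod.snd (M : Set (ℕ × ℕ)) := by
    apply Finset.injOn_of_card_image_eq
    rw [h.2.2.2, hc, h.2.1]
  intro p hp q hq hpq
  exact hinj (by simpa using hp) (by simpa using hq) hpq

/-- Number of free rows of a configuration. -/
lemma freeR_card {k i : ℕ} {C : Board} (hrows : ∀ c ∈ C, c.1 < k)
    (hinj : ∀ p ∈ C, ∀ q ∈ C, p.1 = q.1 → p = q) (hcard : C.card = k - i) (hik : i ≤ k) :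
    (freeR k C).card = i := by
  have himg : C.image Prod.fst ⊆ range k := by
    intro r hr
    simp only [Finset.mem_image] at hr
    obtain ⟨c, hc, rfl⟩ := hr
    exact Finset.mem_range.2 (hrows c hc)
  have heq : freeR k C = range k \ C.image Prod.fst := by
    ext r
    simp only [freeR, Finset.mem_filter, Finset.mem_sdiff, Finset.mem_image, Finset.mem_range]
    constructor
    · rintro ⟨h1, h2⟩
      exact ⟨h1, by rintro ⟨c, hc, rfl⟩; exact h2 c hc rfl⟩
    · rintro ⟨h1, h2⟩
      exact ⟨h1, fun c hc hcr => h2 ⟨c, hc, hcr⟩⟩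
  have hci : (C.image Prod.fst).card = k - i := by
    rw [Finset.card_image_of_injOn, hcard]
    intro p hp q hq hpq
    exact hinj p (by simpa using hp) q (by simpa using hq) hpq
  rw [heq, Finset.card_sdiff_of_subset himg, hci, Finset.card_range]
  omega

lemma freeC_card {k i : ℕ} {C : Board} (hcols : ∀ c ∈ C, c.2 < k)
    (hinj : ∀ p ∈ C, ∀ q ∈ C, p.2 = q.2 → p = q) (hcard : C.card = k - i) (hik : i ≤ k) :
    (freeC k C).card = i := by
  have himg : C.image Prod.snd ⊆ range k := by
    intro r hr
    simp only [Finset.mem_image] at hr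
    obtain ⟨c, hc, rfl⟩ := hr
    exact Finset.mem_range.2 (hcols c hc)
  have heq : freeC k C = range k \ C.image Prod.snd := by
    ext r
    simp only [freeC, Finset.mem_filter, Finset.mem_sdiff, Finset.mem_image, Finset.mem_range]
    constructor
    · rintro ⟨h1, h2⟩
      exact ⟨h1, by rintro ⟨c, hc, rfl⟩; exact h2 c hc rfl⟩
    · rintro ⟨h1, h2⟩
      exact ⟨h1, fun c hc hcr => h2 ⟨c, hc, hcr⟩⟩
  have hci : (C.image Prod.snd).card = k - i := by
    rw [Finset.card_image_of_injOn, hcard]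
    intro p hp q hq hpq
    exact hinj p (by simpa using hp) q (by simpa using hq) hpq
  rw [heq, Finset.card_sdiff_of_subset himg, hci, Finset.card_range]
  omega

/-- Generic lemma: cells whose row carries a `U`-rook and whose column carries a
`V`-rook (subject to a relation) are counted by pairs. -/
lemma card_cells {U V : Board}
    (hU : ∀ p ∈ U, ∀ q ∈ U, p.1 = q.1 → p = q)
    (hV : ∀ p ∈ V, ∀ q ∈ V, p.2 = q.2 → p = q)
    (S : Finset (ℕ × ℕ)) (Q : ℕ × ℕ → ℕ × ℕ → Prop) [∀ u v, Decidable (Q u v)]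
    (hS : ∀ a, a ∈ S ↔ ∃ u ∈ U, ∃ v ∈ V, u.1 = a.1 ∧ v.2 = a.2 ∧ Q u v) :
    S.card = ((U ×ˢ V).filter fun p => Q p.1 p.2).card := by
  rw [eq_comm]
  apply Finset.card_bij (fun p _ => (p.1.1, p.2.2))
  · intro p hp
    simp only [Finset.mem_filter, Finset.mem_product] at hp
    exact (hS _).2 ⟨p.1, hp.1.1, p.2, hp.1.2, rfl, rfl, hp.2⟩
  · intro p hp q hq hpq
    simp only [Finset.mem_filter, Finset.mem_product] at hp hq
    have hcomp := Prod.mk.inj hpq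
    have h1 : p.1 = q.1 := hU p.1 hp.1.1 q.1 hq.1.1 hcomp.1
    have h2 : p.2 = q.2 := hV p.2 hp.1.2 q.2 hq.1.2 hcomp.2
    exact Prod.ext h1 h2
  · intro a ha
    obtain ⟨u, hu, v, hv, h1, h2, hq⟩ := (hS a).1 ha
    refine ⟨(u, v), ?_, ?_⟩
    · simp only [Finset.mem_filter, Finset.mem_product]
      exact ⟨⟨hu, hv⟩, hq⟩
    · ext <;> simp [h1, h2]

end QRB
namespace QRB
open Finset

lemma qInt_succ {F : Type*} [CommSemiring F] (q : F) (k : ℕ) :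
    qInt q (k + 1) = 1 + q * qInt q k := by
  rw [qInt, qInt, Finset.sum_range_succ', Finset.mul_sum]
  simp [pow_succ, mul_comm, add_comm]

lemma sum_pow_count {F : Type*} [CommSemiring F] (q : F) :
    ∀ (k : ℕ) (S : Finset ℕ), S.card = k →
      ∑ s ∈ S, q ^ (S.filter (fun t => s < t)).card = qInt q k := by
  intro k
  induction k with
  | zero =>
    intro S hS
    rw [Finset.card_eq_zero] at hS
    subst hS
    simp [qInt]
  | succ k ih =>
    intro S hS
    have hne : S.Nonempty := Finset.card_pos.1 (by omega)
    set r := S.max' hne with hr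
    have hrS : r ∈ S := S.max'_mem hne
    rw [← Finset.insert_erase hrS, Finset.sum_insert (Finset.notMem_erase r S)]
    have h0 : ((insert r (S.erase r)).filter fun t => r < t).card = 0 := by
      rw [Finset.card_eq_zero, Finset.filter_eq_empty_iff]
      intro t ht
      rw [Finset.insert_erase hrS] at ht
      exact not_lt.2 (S.le_max' t ht)
    have hstep : ∀ s ∈ S.erase r,
        ((insert r (S.erase r)).filter fun t => s < t).card
          = ((S.erase r).filter fun t => s < t).card + 1 := by
      intro s hs
      have hsr : s < r := by
        have h1 : s ≤ r := S.le_max' s (Finset.mem_of_mem_erase hs)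
        have h2 : s ≠ r := Finset.ne_of_mem_erase hs
        omega
      rw [Finset.filter_insert, if_pos hsr,
        Finset.card_insert_of_notMem (fun h => Finset.notMem_erase r S (Finset.mem_of_mem_filter r h))]
    rw [Finset.sum_congr rfl (fun s hs => by rw [hstep s hs])]
    have herase : (S.erase r).card = k := by
      rw [Finset.card_erase_of_mem hrS, hS]
      omega
      
    rw [h0]
    have hh : ∑ s ∈ S.erase r, q ^ (((S.erase r).filter fun t => s < t).card + 1)
        = q * ∑ s ∈ S.erase r, q ^ ((S.erase r).filter fun t => s < t).card := by
      rw [Finset.mul_sum]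
      exact Finset.sum_congr rfl (fun s _ => by ring)
    rw [hh, ih _ herase, qInt_succ]
    ring

lemma invM_insert {R S : Finset ℕ} {r s : ℕ} {M' : Board}
    (hM' : M' ∈ matchings (R.erase r) (S.erase s)) (hrR : r ∈ R) (hsS : s ∈ S)
    (hrmax : ∀ t ∈ R, t ≤ r) (hScard : S.card = R.card) :
    invM (insert (r, s) M') = invM M' + (S.filter (fun t => s < t)).card := by
  have hsub : M' ⊆ (R.erase r) ×ˢ (S.erase s) := (mem_matchings.1 hM').1
  have hmem : ∀ b ∈ M', b.1 ∈ R.erase r ∧ b.2 ∈ S.erase s := by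
    intro b hb
    have := hsub hb
    rw [Finset.mem_product] at this
    exact this
  have hpM' : (r, s) ∉ M' := by
    intro h
    exact Finset.notMem_erase r R (hmem _ h).1
  have hsplit : (((insert (r,s) M') ×ˢ (insert (r,s) M')).filter
        fun x => x.2.1 < x.1.1 ∧ x.1.2 < x.2.2)
      = ((M' ×ˢ M').filter fun x => x.2.1 < x.1.1 ∧ x.1.2 < x.2.2)
        ∪ (M'.filter fun b => s < b.2).image (fun b => ((r,s), b)) := by
    ext x
    simp only [Finset.mem_filter, Finset.mem_product, Finset.mem_union, Finset.mem_insert,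
      Finset.mem_image]
    constructor
    · rintro ⟨⟨ha, hb⟩, hcond⟩
      rcases ha with ha | ha
      · rcases hb with hb | hb
        · exfalso
          rw [ha, hb] at hcond
          exact lt_irrefl _ hcond.1
        · right
          refine ⟨x.2, ⟨hb, ?_⟩, ?_⟩
          · have := hcond.2
            rw [ha] at this
            exact this
          · rw [Prod.ext_iff]
            exact ⟨ha.symm, rfl⟩
      · rcases hb with hb | hb
        · exfalso
          have h1 : x.1.1 ∈ R.erase r := (hmem _ ha).1
          have h2 : x.1.1 ≤ r := hrmax _ (Finset.mem_of_mem_erase h1)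
          have h3 : x.2.1 < x.1.1 := hcond.1
          rw [hb] at h3
          simp only [] at h3
          omega
        · left
          exact ⟨⟨ha, hb⟩, hcond⟩
    · rintro (⟨⟨ha, hb⟩, hcond⟩ | ⟨b, ⟨hb, hbs⟩, rfl⟩)
      · exact ⟨⟨Or.inr ha, Or.inr hb⟩, hcond⟩
      · have h1 : b.1 ∈ R.erase r := (hmem _ hb).1
        have h2 : b.1 ≤ r := hrmax _ (Finset.mem_of_mem_erase h1)
        have h3 : b.1 ≠ r := Finset.ne_of_mem_erase h1
        refine ⟨⟨Or.inl rfl, Or.inr hb⟩, ?_, ?_⟩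
        · show b.1 < r
          omega
        · exact hbs
  have hdisj : Disjoint ((M' ×ˢ M').filter fun x => x.2.1 < x.1.1 ∧ x.1.2 < x.2.2)
      ((M'.filter fun b => s < b.2).image (fun b => ((r,s), b))) := by
    rw [Finset.disjoint_left]
    rintro x hx hx'
    simp only [Finset.mem_filter, Finset.mem_product] at hx
    simp only [Finset.mem_image] at hx'
    obtain ⟨b, -, rfl⟩ := hx'
    exact hpM' hx.1.1
  have hcnt : (M'.filter fun b => s < b.2).card = (S.filter fun t => s < t).card := by
    have hcards : (S.erase s).card = (R.erase r).card := by
      rw [Finset.card_erase_of_mem hsS, Finset.card_erase_of_mem hrR, hScard]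
    have hinj := matchings_colInj hcards hM'
    have himg : (M'.filter fun b => s < b.2).image Prod.snd
        = (S.erase s).filter fun t => s < t := by
      rw [← (mem_matchings.1 hM').2.2.2]
      exact (Finset.filter_image).symm
    have h1 : ((M'.filter fun b => s < b.2).image Prod.snd).card
        = (M'.filter fun b => s < b.2).card := by
      apply Finset.card_image_of_injOn
      intro p hp q hq hpq
      exact hinj p (Finset.mem_of_mem_filter p hp)
        q (Finset.mem_of_mem_filter q hq) hpq
    have h2 : ((S.erase s).filter fun t => s < t) = S.filter fun t => s < t := by
      ext t
      simp only [Finset.mem_filter, Finset.mem_erase]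
      constructor
      · rintro ⟨⟨-, ht⟩, hst⟩; exact ⟨ht, hst⟩
      · rintro ⟨ht, hst⟩; exact ⟨⟨by omega, ht⟩, hst⟩
    rw [← h1, himg, h2]
  rw [invM, hsplit, Finset.card_union_of_disjoint hdisj,
    Finset.card_image_of_injective _ (fun a b h => (Prod.mk.inj h).2), hcnt, invM]

lemma sum_matchings {F : Type*} [CommSemiring F] (q : F) :
    ∀ (i : ℕ) (R S : Finset ℕ), R.card = i → S.card = i →
      ∑ M ∈ matchings R S, q ^ invM M = qFact q i := by
  intro i
  induction i with
  | zero =>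
    intro R S hR hS
    rw [Finset.card_eq_zero] at hR hS
    subst hR; subst hS
    have h : matchings (∅ : Finset ℕ) (∅ : Finset ℕ) = {∅} := by
      ext M
      simp only [mem_matchings, Finset.mem_singleton]
      constructor
      · rintro ⟨hsub, -, -, -⟩
        simpa using Finset.subset_empty.1 (by simpa using hsub)
      · rintro rfl
        simp
    rw [h]
    simp [invM, qFact]
  | succ i ih =>
    intro R S hR hS
    have hne : R.Nonempty := Finset.card_pos.1 (by omega)
    set r := R.max' hne with hrdef
    have hrR : r ∈ R := R.max'_mem hne
    have hrmax : ∀ t ∈ R, t ≤ r := fun t ht => R.le_max' t ht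
    have key : ∑ x ∈ S.sigma (fun s => matchings (R.erase r) (S.erase s)),
          (q ^ ((S.filter fun t => x.1 < t).card) * q ^ invM x.2)
        = ∑ M ∈ matchings R S, q ^ invM M := by
      apply Finset.sum_bij (fun x _ => insert (r, x.1) x.2)
      · -- maps to
        rintro ⟨s, M'⟩ hx
        simp only [Finset.mem_sigma] at hx
        obtain ⟨hsS, hM'⟩ := hx
        obtain ⟨hsub, hcard, hfst, hsnd⟩ := mem_matchings.1 hM'
        have hpM' : (r, s) ∉ M' := by
          intro h
          have := hsub h
          rw [Finset.mem_product] at this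
          exact Finset.notMem_erase r R this.1
        rw [mem_matchings]
        refine ⟨?_, ?_, ?_, ?_⟩
        · intro x hx
          rcases Finset.mem_insert.1 hx with rfl | hx
          · rw [Finset.mem_product]; exact ⟨hrR, hsS⟩
          · have := hsub hx
            rw [Finset.mem_product] at this ⊢
            exact ⟨Finset.mem_of_mem_erase this.1, Finset.mem_of_mem_erase this.2⟩
        · rw [Finset.card_insert_of_notMem hpM', hcard,
            Finset.card_erase_of_mem hrR, hR]
          omega
        · rw [Finset.image_insert, hfst]
          simpa using Finset.insert_erase hrR
        · rw [Finset.image_insert, hsnd]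
          simpa using Finset.insert_erase hsS
      · -- injective
        rintro ⟨s, M'⟩ hx ⟨s', M''⟩ hx' heq
        simp only [Finset.mem_sigma] at hx hx'
        have hpM' : (r, s) ∉ M' := by
          intro h
          have := (mem_matchings.1 hx.2).1 h
          rw [Finset.mem_product] at this
          exact Finset.notMem_erase r R this.1
        have hpM'' : (r, s') ∉ M'' := by
          intro h
          have := (mem_matchings.1 hx'.2).1 h
          rw [Finset.mem_product] at this
          exact Finset.notMem_erase r R this.1
        have hss' : s = s' := by
          have : (r, s) ∈ insert (r, s') M'' := by
            rw [← heq]; exact Finset.mem_insert_self _ _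
          rcases Finset.mem_insert.1 this with h | h
          · exact (Prod.mk.inj h).2
          · exfalso
            have := (mem_matchings.1 hx'.2).1 h
            rw [Finset.mem_product] at this
            exact Finset.notMem_erase r R this.1
        subst hss'
        have hMM : M' = M'' := by
          have h1 : (insert (r, s) M').erase (r, s) = (insert (r, s) M'').erase (r, s) := by
            rw [heq]
          rwa [Finset.erase_insert hpM', Finset.erase_insert hpM''] at h1
        rw [hMM]
      · -- surjective
        intro M hM
        obtain ⟨hsub, hcard, hfst, hsnd⟩ := mem_matchings.1 hM
        have hr' : r ∈ M.image Prod.fst := by rw [hfst]; exact hrR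
        obtain ⟨p, hpM, hpr⟩ := Finset.mem_image.1 hr'
        have hsS : p.2 ∈ S := by
          rw [← hsnd]
          exact Finset.mem_image_of_mem _ hpM
        have hScard : S.card = R.card := by rw [hR, hS]
        have hrowInj := matchings_rowInj hM
        have hcolInj := matchings_colInj hScard hM
        refine ⟨⟨p.2, M.erase p⟩, ?_, ?_⟩
        · simp only [Finset.mem_sigma]
          refine ⟨hsS, ?_⟩
          rw [mem_matchings]
          refine ⟨?_, ?_, ?_, ?_⟩
          · intro x hx
            have hxM := Finset.mem_of_mem_erase hx
            have hxp : x ≠ p := Finset.ne_of_mem_erase hx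
            have := hsub hxM
            rw [Finset.mem_product] at this ⊢
            refine ⟨Finset.mem_erase.2 ⟨?_, this.1⟩, Finset.mem_erase.2 ⟨?_, this.2⟩⟩
            · intro h
              exact hxp (hrowInj x hxM p hpM (h.trans hpr.symm))
            · intro h
              exact hxp (hcolInj x hxM p hpM h)
          · rw [Finset.card_erase_of_mem hpM, hcard, hR,
              Finset.card_erase_of_mem hrR, hR]
          · -- image fst of erase
            ext y
            simp only [Finset.mem_image, Finset.mem_erase]
            constructor
            · rintro ⟨x, ⟨hxp, hxM⟩, rfl⟩
              refine ⟨?_, by rw [← hfst]; exact Finset.mem_image_of_mem _ hxM⟩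
              intro h
              exact hxp (hrowInj x hxM p hpM (h.trans hpr.symm))
            · rintro ⟨hyr, hyR⟩
              rw [← hfst] at hyR
              obtain ⟨x, hxM, rfl⟩ := Finset.mem_image.1 hyR
              refine ⟨x, ⟨?_, hxM⟩, rfl⟩
              intro h
              rw [h, hpr] at hyr
              exact hyr rfl
          · ext y
            simp only [Finset.mem_image, Finset.mem_erase]
            constructor
            · rintro ⟨x, ⟨hxp, hxM⟩, rfl⟩
              refine ⟨?_, by rw [← hsnd]; exact Finset.mem_image_of_mem _ hxM⟩
              intro h
              exact hxp (hcolInj x hxM p hpM h)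
            · rintro ⟨hyp, hyS⟩
              rw [← hsnd] at hyS
              obtain ⟨x, hxM, rfl⟩ := Finset.mem_image.1 hyS
              refine ⟨x, ⟨?_, hxM⟩, rfl⟩
              intro h
              rw [h] at hyp
              exact hyp rfl
        · show insert (r, p.2) (M.erase p) = M
          have hp : (r, p.2) = p := by
            rw [← hpr]
          rw [hp]
          exact Finset.insert_erase hpM
      · -- value compatibility
        rintro ⟨s, M'⟩ hx
        simp only [Finset.mem_sigma] at hx
        rw [invM_insert hx.2 hrR hx.1 hrmax (by rw [hR, hS]), pow_add]
        ring
    rw [← key, Finset.sum_sigma]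
    have hinner : ∀ s ∈ S,
        (∑ M' ∈ matchings (R.erase r) (S.erase s),
            q ^ ((S.filter fun t => s < t).card) * q ^ invM M')
          = q ^ ((S.filter fun t => s < t).card) * qFact q i := by
      intro s hs
      rw [← Finset.mul_sum, ih _ _ (by rw [Finset.card_erase_of_mem hrR, hR]; omega)
        (by rw [Finset.card_erase_of_mem hs, hS]; omega)]
    rw [Finset.sum_congr rfl hinner, ← Finset.sum_mul, sum_pow_count q (i+1) S hS]
    have hqf : qFact q (i+1) = qFact q i * qInt q (i+1) := by
      rw [qFact, qFact, Finset.prod_range_succ]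
    rw [hqf]
    ring

end QRB
namespace QRB
open Finset

def crossB (n : ℕ) (CB : Board) : ℕ :=
  ((freeC n CB ×ˢ CB).filter fun p => p.1 < p.2.2).card

def crossT (n : ℕ) (CB : Board) : ℕ :=
  ((freeR n CB ×ˢ CB).filter fun p => p.1 < p.2.1).card

lemma card_swap {s : Board} (P : ℕ × ℕ → ℕ × ℕ → Prop) [∀ u v, Decidable (P u v)] :
    ((s ×ˢ s).filter fun p => P p.1 p.2).card = ((s ×ˢ s).filter fun p => P p.2 p.1).card := by
  apply Finset.card_bij (fun p _ => (p.2, p.1))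
  · intro p hp
    simp only [Finset.mem_filter, Finset.mem_product] at hp ⊢
    exact ⟨⟨hp.1.2, hp.1.1⟩, hp.2⟩
  · intro p hp q hq h
    have := Prod.mk.inj h
    exact Prod.ext this.2 this.1
  · intro p hp
    simp only [Finset.mem_filter, Finset.mem_product] at hp
    refine ⟨(p.2, p.1), ?_, rfl⟩
    simp only [Finset.mem_filter, Finset.mem_product]
    exact ⟨⟨hp.1.2, hp.1.1⟩, hp.2⟩

lemma rot_rot {n : ℕ} {C : Board} (h : ∀ c ∈ C, c.1 < n ∧ c.2 < n) :
    rot180 n n (rot180 n n C) = C := by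
  ext c
  simp only [rot180, Finset.mem_image]
  constructor
  · rintro ⟨d, ⟨b, hb, rfl⟩, rfl⟩
    obtain ⟨h1, h2⟩ := h b hb
    have e1 : n - 1 - (n - 1 - b.1) = b.1 := by omega
    have e2 : n - 1 - (n - 1 - b.2) = b.2 := by omega
    show (n - 1 - (n - 1 - b.1, n - 1 - b.2).1, n - 1 - (n - 1 - b.1, n - 1 - b.2).2) ∈ C
    simp only []
    rw [e1, e2]
    exact hb
  · intro hc
    obtain ⟨h1, h2⟩ := h c hc
    refine ⟨(n - 1 - c.1, n - 1 - c.2), ⟨c, hc, rfl⟩, ?_⟩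
    rw [Prod.ext_iff]
    constructor <;> simp <;> omega

lemma rot_mem_grid {n : ℕ} {C : Board} (h : ∀ c ∈ C, c.1 < n ∧ c.2 < n) :
    ∀ c ∈ rot180 n n C, c.1 < n ∧ c.2 < n := by
  intro c hc
  rw [rot180, Finset.mem_image] at hc
  obtain ⟨b, hb, rfl⟩ := hc
  obtain ⟨h1, h2⟩ := h b hb
  constructor <;> simp <;> omega

lemma rot_config {n k : ℕ} {B CB : Board} (hB : ∀ c ∈ B, c.1 < n ∧ c.2 < n)
    (h : CB ∈ rookConfigs B k) : rot180 n n CB ∈ rookConfigs (rot180 n n B) k := by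
  obtain ⟨hsub, hcard, hna⟩ := mem_rookConfigs.1 h
  have hCB : ∀ c ∈ CB, c.1 < n ∧ c.2 < n := fun c hc => hB c (hsub hc)
  have hinj : ∀ b ∈ CB, ∀ b' ∈ CB,
      (n - 1 - b.1, n - 1 - b.2) = (n - 1 - b'.1, n - 1 - b'.2) → b = b' := by
    intro b hb b' hb' he
    obtain ⟨e1, e2⟩ := Prod.mk.inj he
    obtain ⟨hb1, hb2⟩ := hCB b hb
    obtain ⟨hb1', hb2'⟩ := hCB b' hb'
    rw [Prod.ext_iff]
    omega
  rw [mem_rookConfigs]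
  refine ⟨Finset.image_subset_image hsub, ?_, ?_⟩
  · rw [rot180, Finset.card_image_of_injOn, hcard]
    intro b hb b' hb' he
    exact hinj b (by simpa using hb) b' (by simpa using hb') he
  · intro c hc c' hc' hne
    rw [rot180, Finset.mem_image] at hc hc'
    obtain ⟨b, hb, rfl⟩ := hc
    obtain ⟨b', hb', rfl⟩ := hc'
    have hbb : b ≠ b' := fun h => hne (by rw [h])
    obtain ⟨hr, hc2⟩ := hna b hb b' hb' hbb
    obtain ⟨hb1, hb2⟩ := hCB b hb
    obtain ⟨hb1', hb2'⟩ := hCB b' hb'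
    constructor <;> simp <;> omega

lemma sum_rot {F : Type*} [CommSemiring F] (q : F) {n : ℕ} {B : Board}
    (hB : ∀ c ∈ B, c.1 < n ∧ c.2 < n) (k : ℕ) (f : Board → F) :
    ∑ CB ∈ rookConfigs B k, f (rot180 n n CB)
      = ∑ D ∈ rookConfigs (rot180 n n B) k, f D := by
  apply Finset.sum_bij (fun CB _ => rot180 n n CB)
  · intro CB hCB
    exact rot_config hB hCB
  · intro CB hCB CB' hCB' he
    have h1 : ∀ c ∈ CB, c.1 < n ∧ c.2 < n :=
      fun c hc => hB c ((mem_rookConfigs.1 hCB).1 hc)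
    have h2 : ∀ c ∈ CB', c.1 < n ∧ c.2 < n :=
      fun c hc => hB c ((mem_rookConfigs.1 hCB').1 hc)
    rw [← rot_rot h1, ← rot_rot h2, he]
  · intro D hD
    have hrB : ∀ c ∈ rot180 n n B, c.1 < n ∧ c.2 < n := rot_mem_grid hB
    have hD' : ∀ c ∈ D, c.1 < n ∧ c.2 < n :=
      fun c hc => hrB c ((mem_rookConfigs.1 hD).1 hc)
    refine ⟨rot180 n n D, ?_, rot_rot hD'⟩
    have := rot_config hrB hD
    rwa [rot_rot hB] at this
  · intro CB _
    rfl

/-- The central counting identity for the rotated configuration. -/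
lemma invStat_rot {n i : ℕ} {CB : Board}
    (hsub : ∀ c ∈ CB, c.1 < n ∧ c.2 < n)
    (hrow : ∀ p ∈ CB, ∀ q ∈ CB, p.1 = q.1 → p = q)
    (hcol : ∀ p ∈ CB, ∀ q ∈ CB, p.2 = q.2 → p = q)
    (hcard : CB.card = n - i) (hin : i ≤ n) :
    invStat n n (rot180 n n CB) = invM CB + crossB n CB + crossT n CB + i * i := by
  classical
  -- Step 1: transport along the rotation
  set S0 : Finset (ℕ × ℕ) := (grid n n).filter fun a =>
    (∀ b ∈ CB, b.1 = a.1 → a.2 < b.2) ∧ (∀ b ∈ CB, b.2 = a.2 → a.1 < b.1) with hS0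
  have step1 : invStat n n (rot180 n n CB) = S0.card := by
    rw [invStat, eq_comm]
    apply Finset.card_bij (fun a _ => (n - 1 - a.1, n - 1 - a.2))
    · intro a ha
      simp only [hS0, Finset.mem_filter, grid, Finset.mem_product, Finset.mem_range] at ha ⊢
      obtain ⟨⟨ha1, ha2⟩, hc1, hc2⟩ := ha
      refine ⟨⟨by omega, by omega⟩, ?_, ?_⟩
      · intro c hc
        rw [rot180, Finset.mem_image] at hc
        obtain ⟨b, hb, rfl⟩ := hc
        obtain ⟨hb1, hb2⟩ := hsub b hb
        intro he
        simp only at he ⊢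
        have : b.1 = a.1 := by omega
        have := hc1 b hb this
        omega
      · intro c hc
        rw [rot180, Finset.mem_image] at hc
        obtain ⟨b, hb, rfl⟩ := hc
        obtain ⟨hb1, hb2⟩ := hsub b hb
        intro he
        simp only at he ⊢
        have : b.2 = a.2 := by omega
        have := hc2 b hb this
        omega
    · intro a ha a' ha' he
      simp only [hS0, Finset.mem_filter, grid, Finset.mem_product, Finset.mem_range] at ha ha'
      obtain ⟨e1, e2⟩ := Prod.mk.inj he
      rw [Prod.ext_iff]
      constructor
      · have := ha.1.1; have := ha'.1.1; omega
      · have := ha.1.2; have := ha'.1.2; omega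
    · intro a ha
      simp only [invStat, Finset.mem_filter, grid, Finset.mem_product, Finset.mem_range] at ha
      obtain ⟨⟨ha1, ha2⟩, hc1, hc2⟩ := ha
      refine ⟨(n - 1 - a.1, n - 1 - a.2), ?_, ?_⟩
      · simp only [hS0, Finset.mem_filter, grid, Finset.mem_product, Finset.mem_range]
        refine ⟨⟨by omega, by omega⟩, ?_, ?_⟩
        · intro b hb he
          obtain ⟨hb1, hb2⟩ := hsub b hb
          have hmem : (n - 1 - b.1, n - 1 - b.2) ∈ rot180 n n CB := by
            rw [rot180, Finset.mem_image]
            exact ⟨b, hb, rfl⟩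
          have := hc1 _ hmem (by simp only []; omega)
          simp only at this
          omega
        · intro b hb he
          obtain ⟨hb1, hb2⟩ := hsub b hb
          have hmem : (n - 1 - b.1, n - 1 - b.2) ∈ rot180 n n CB := by
            rw [rot180, Finset.mem_image]
            exact ⟨b, hb, rfl⟩
          have := hc2 _ hmem (by simp only []; omega)
          simp only at this
          omega
      · rw [Prod.ext_iff]
        constructor <;> simp <;> omega
  rw [step1]
  -- Step 2: partition S0 according to whether row and column carry a rook
  have hPR : ∀ (T : Finset (ℕ × ℕ)) (p : ℕ × ℕ → Prop) [DecidablePred p],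
      T.card = (T.filter p).card + (T.filter fun a => ¬ p a).card :=
    fun T p _ => (Finset.card_filter_add_card_filter_not p).symm
  rw [hPR S0 (fun a => ∃ b ∈ CB, b.1 = a.1)]
  rw [hPR (S0.filter fun a => ∃ b ∈ CB, b.1 = a.1) (fun a => ∃ b ∈ CB, b.2 = a.2)]
  rw [hPR (S0.filter fun a => ¬ ∃ b ∈ CB, b.1 = a.1) (fun a => ∃ b ∈ CB, b.2 = a.2)]
  have c1 : ((S0.filter fun a => ∃ b ∈ CB, b.1 = a.1).filter fun a => ∃ b ∈ CB, b.2 = a.2).card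
      = invM CB := by
    rw [card_cells hrow hcol _ (fun u v => v.2 < u.2 ∧ u.1 < v.1) ?_]
    · rw [invM, card_swap (fun u v => v.1 < u.1 ∧ u.2 < v.2)]
      apply Finset.card_nbij id
      · intro p hp
        simp only [Finset.mem_coe, Finset.mem_filter, Finset.mem_product, id_eq] at hp ⊢
        exact ⟨hp.1, hp.2.2, hp.2.1⟩
      · intro p hp q hq h
        exact h
      · intro p hp
        simp only [Finset.mem_coe, Finset.mem_filter, Finset.mem_product, Set.mem_image] at hp ⊢
        exact ⟨p, ⟨hp.1, hp.2.2, hp.2.1⟩, rfl⟩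
    · intro a
      simp only [hS0, Finset.mem_filter, grid, Finset.mem_product, Finset.mem_range]
      constructor
      · rintro ⟨⟨⟨⟨ha1, ha2⟩, hc1a, hc2a⟩, u, hu, hu1⟩, v, hv, hv2⟩
        exact ⟨u, hu, v, hv, hu1, hv2, by rw [hv2]; exact hc1a u hu hu1,
          by rw [hu1]; exact hc2a v hv hv2⟩
      · rintro ⟨u, hu, v, hv, hu1, hv2, hq1, hq2⟩
        obtain ⟨hun1, hun2⟩ := hsub u hu
        obtain ⟨hvn1, hvn2⟩ := hsub v hv
        refine ⟨⟨⟨⟨by omega, by omega⟩, ?_, ?_⟩, u, hu, hu1⟩, v, hv, hv2⟩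
        · intro b hb hb1
          have : b = u := hrow b hb u hu (by rw [hb1, hu1])
          subst this
          omega
        · intro b hb hb2
          have : b = v := hcol b hb v hv (by rw [hb2, hv2])
          subst this
          omega
  have c2 : ((S0.filter fun a => ∃ b ∈ CB, b.1 = a.1).filter fun a => ¬ ∃ b ∈ CB, b.2 = a.2).card
      = crossB n CB := by
    rw [crossB, eq_comm]
    apply Finset.card_bij (fun p _ => (p.2.1, p.1))
    · rintro ⟨s, b⟩ hp
      simp only [Finset.mem_filter, Finset.mem_product, freeC, Finset.mem_range] at hp
      obtain ⟨⟨⟨hsn, hfree⟩, hb⟩, hlt⟩ := hp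
      obtain ⟨hb1, hb2⟩ := hsub b hb
      simp only [hS0, Finset.mem_filter, grid, Finset.mem_product, Finset.mem_range]
      refine ⟨⟨⟨⟨hb1, hsn⟩, ?_, ?_⟩, b, hb, rfl⟩, ?_⟩
      · intro c hc hc1
        have : c = b := hrow c hc b hb hc1
        subst this
        exact hlt
      · intro c hc hc2
        exact absurd hc2 (hfree c hc)
      · rintro ⟨c, hc, hc2⟩
        exact hfree c hc hc2
    · rintro ⟨s, b⟩ hp ⟨s', b'⟩ hp' he
      simp only [Finset.mem_filter, Finset.mem_product] at hp hp'
      obtain ⟨e1, e2⟩ := Prod.mk.inj he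
      have : b = b' := hrow b hp.1.2 b' hp'.1.2 e1
      rw [Prod.ext_iff]
      exact ⟨e2, this⟩
    · intro a ha
      simp only [hS0, Finset.mem_filter, grid, Finset.mem_product, Finset.mem_range] at ha
      obtain ⟨⟨⟨⟨ha1, ha2⟩, hc1a, hc2a⟩, u, hu, hu1⟩, hnc⟩ := ha
      refine ⟨(a.2, u), ?_, ?_⟩
      · simp only [Finset.mem_filter, Finset.mem_product, freeC, Finset.mem_range]
        refine ⟨⟨⟨ha2, ?_⟩, hu⟩, hc1a u hu hu1⟩
        intro c hc hc2
        exact hnc ⟨c, hc, hc2⟩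
      · rw [Prod.ext_iff]
        exact ⟨hu1, rfl⟩
  have c3 : ((S0.filter fun a => ¬ ∃ b ∈ CB, b.1 = a.1).filter fun a => ∃ b ∈ CB, b.2 = a.2).card
      = crossT n CB := by
    rw [crossT, eq_comm]
    apply Finset.card_bij (fun p _ => (p.1, p.2.2))
    · rintro ⟨t, b⟩ hp
      simp only [Finset.mem_filter, Finset.mem_product, freeR, Finset.mem_range] at hp
      obtain ⟨⟨⟨htn, hfree⟩, hb⟩, hlt⟩ := hp
      obtain ⟨hb1, hb2⟩ := hsub b hb
      simp only [hS0, Finset.mem_filter, grid, Finset.mem_product, Finset.mem_range]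
      refine ⟨⟨⟨⟨htn, hb2⟩, ?_, ?_⟩, ?_⟩, b, hb, rfl⟩
      · intro c hc hc1
        exact absurd hc1 (hfree c hc)
      · intro c hc hc2
        have : c = b := hcol c hc b hb hc2
        subst this
        exact hlt
      · rintro ⟨c, hc, hc1⟩
        exact hfree c hc hc1
    · rintro ⟨t, b⟩ hp ⟨t', b'⟩ hp' he
      simp only [Finset.mem_filter, Finset.mem_product] at hp hp'
      obtain ⟨e1, e2⟩ := Prod.mk.inj he
      have : b = b' := hcol b hp.1.2 b' hp'.1.2 e2
      rw [Prod.ext_iff]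
      exact ⟨e1, this⟩
    · intro a ha
      simp only [hS0, Finset.mem_filter, grid, Finset.mem_product, Finset.mem_range] at ha
      obtain ⟨⟨⟨⟨ha1, ha2⟩, hc1a, hc2a⟩, hnr⟩, v, hv, hv2⟩ := ha
      refine ⟨(a.1, v), ?_, ?_⟩
      · simp only [Finset.mem_filter, Finset.mem_product, freeR, Finset.mem_range]
        refine ⟨⟨⟨ha1, ?_⟩, hv⟩, hc2a v hv hv2⟩
        intro c hc hc1
        exact hnr ⟨c, hc, hc1⟩
      · rw [Prod.ext_iff]
        exact ⟨rfl, hv2⟩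
  have c4 : ((S0.filter fun a => ¬ ∃ b ∈ CB, b.1 = a.1).filter fun a => ¬ ∃ b ∈ CB, b.2 = a.2).card
      = i * i := by
    have hset : ((S0.filter fun a => ¬ ∃ b ∈ CB, b.1 = a.1).filter fun a => ¬ ∃ b ∈ CB, b.2 = a.2)
        = (freeR n CB) ×ˢ (freeC n CB) := by
      ext a
      simp only [hS0, Finset.mem_filter, grid, Finset.mem_product, Finset.mem_range,
        freeR, freeC]
      constructor
      · rintro ⟨⟨⟨⟨ha1, ha2⟩, -, -⟩, hnr⟩, hnc⟩
        exact ⟨⟨ha1, fun c hc hc1 => hnr ⟨c, hc, hc1⟩⟩, ⟨ha2, fun c hc hc2 => hnc ⟨c, hc, hc2⟩⟩⟩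
      · rintro ⟨⟨ha1, hfr⟩, ha2, hfc⟩
        refine ⟨⟨⟨⟨ha1, ha2⟩, ?_, ?_⟩, ?_⟩, ?_⟩
        · intro b hb hb1
          exact absurd hb1 (hfr b hb)
        · intro b hb hb2
          exact absurd hb2 (hfc b hb)
        · rintro ⟨c, hc, hc1⟩
          exact hfr c hc hc1
        · rintro ⟨c, hc, hc2⟩
          exact hfc c hc hc2
    rw [hset, Finset.card_product,
      freeR_card (fun c hc => (hsub c hc).1) hrow hcard hin,
      freeC_card (fun c hc => (hsub c hc).2) hcol hcard hin]
  rw [c1, c2, c3, c4]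
  omega

end QRB
namespace QRB
open Finset

lemma invStat_combine {m n i : ℕ} {CA CB MBL MTR : Board}
    (hCAg : ∀ c ∈ CA, c.1 < m ∧ c.2 < m)
    (hCBg : ∀ c ∈ CB, c.1 < n ∧ c.2 < n)
    (hrowB : ∀ p ∈ CB, ∀ q ∈ CB, p.1 = q.1 → p = q)
    (hcolB : ∀ p ∈ CB, ∀ q ∈ CB, p.2 = q.2 → p = q)
    (hrowA : ∀ p ∈ CA, ∀ q ∈ CA, p.1 = q.1 → p = q)
    (hcolA : ∀ p ∈ CA, ∀ q ∈ CA, p.2 = q.2 → p = q)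
    (hcardA : CA.card = m - i) (hcardB : CB.card = n - i) (him : i ≤ m) (hin : i ≤ n)
    (hM1 : MBL ∈ matchings ((freeR m CA).image (· + n)) (freeC n CB))
    (hM2 : MTR ∈ matchings (freeR n CB) ((freeC m CA).image (· + n))) :
    invStat (m + n) (m + n) (combine n CB CA MBL MTR)
      = invStat m m CA + invM CB + crossB n CB + crossT n CB + invM MBL + invM MTR := by
  classical
  set C := combine n CB CA MBL MTR with hC
  have memC : ∀ c, c ∈ C ↔ c ∈ CB ∨ c ∈ MBL ∨ c ∈ MTR ∨ ∃ x ∈ CA, (x.1 + n, x.2 + n) = c := by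
    intro c
    simp [hC, combine, shiftB, Finset.mem_union, Finset.mem_image, or_assoc]
  obtain ⟨hsubM1, hcardM1, hfstM1, hsndM1⟩ := mem_matchings.1 hM1
  obtain ⟨hsubM2, hcardM2, hfstM2, hsndM2⟩ := mem_matchings.1 hM2
  have haddinj : Function.Injective (· + n : ℕ → ℕ) := add_left_injective n
  have hcfR : ((freeR m CA).image (· + n)).card = i := by
    rw [Finset.card_image_of_injective _ haddinj,
      freeR_card (fun c hc => (hCAg c hc).1) hrowA hcardA him]
  have hcfC : (freeC n CB).card = i :=
    freeC_card (fun c hc => (hCBg c hc).2) hcolB hcardB hin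
  have hcfRB : (freeR n CB).card = i :=
    freeR_card (fun c hc => (hCBg c hc).1) hrowB hcardB hin
  have hcfCA : ((freeC m CA).image (· + n)).card = i := by
    rw [Finset.card_image_of_injective _ haddinj,
      freeC_card (fun c hc => (hCAg c hc).2) hcolA hcardA him]
  have hrowM1 := matchings_rowInj hM1
  have hcolM1 := matchings_colInj (by rw [hcfC, hcfR]) hM1
  have hrowM2 := matchings_rowInj hM2
  have hcolM2 := matchings_colInj (by rw [hcfCA, hcfRB]) hM2
  -- region facts
  have hM1mem : ∀ p ∈ MBL, (n ≤ p.1 ∧ p.1 < n + m ∧ ∀ c ∈ CA, c.1 + n ≠ p.1)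
      ∧ (p.2 < n ∧ ∀ c ∈ CB, c.2 ≠ p.2) := by
    intro p hp
    have := hsubM1 hp
    rw [Finset.mem_product] at this
    obtain ⟨h1, h2⟩ := this
    rw [Finset.mem_image] at h1
    obtain ⟨x, hx, hxp⟩ := h1
    simp only [freeR, Finset.mem_filter, Finset.mem_range] at hx
    simp only [freeC, Finset.mem_filter, Finset.mem_range] at h2
    refine ⟨⟨by omega, by omega, ?_⟩, h2.1, h2.2⟩
    intro c hc he
    exact hx.2 c hc (by omega)
  have hM2mem : ∀ p ∈ MTR, (p.1 < n ∧ ∀ c ∈ CB, c.1 ≠ p.1)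
      ∧ (n ≤ p.2 ∧ p.2 < n + m ∧ ∀ c ∈ CA, c.2 + n ≠ p.2) := by
    intro p hp
    have := hsubM2 hp
    rw [Finset.mem_product] at this
    obtain ⟨h1, h2⟩ := this
    rw [Finset.mem_image] at h2
    obtain ⟨x, hx, hxp⟩ := h2
    simp only [freeR, Finset.mem_filter, Finset.mem_range] at h1
    simp only [freeC, Finset.mem_filter, Finset.mem_range] at hx
    refine ⟨⟨h1.1, h1.2⟩, by omega, by omega, ?_⟩
    intro c hc he
    exact hx.2 c hc (by omega)
  -- row/column coverage characterizations
  have hM1rows : ∀ r, (∃ p ∈ MBL, p.1 = r) ↔ (n ≤ r ∧ r < n + m ∧ ∀ c ∈ CA, c.1 + n ≠ r) := by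
    intro r
    constructor
    · rintro ⟨p, hp, rfl⟩
      exact (hM1mem p hp).1
    · rintro ⟨h1, h2, h3⟩
      have : r ∈ MBL.image Prod.fst := by
        rw [hfstM1, Finset.mem_image]
        refine ⟨r - n, ?_, by omega⟩
        simp only [freeR, Finset.mem_filter, Finset.mem_range]
        refine ⟨by omega, fun c hc he => h3 c hc (by omega)⟩
      rw [Finset.mem_image] at this
      obtain ⟨p, hp, hpr⟩ := this
      exact ⟨p, hp, hpr⟩
  have hM1cols : ∀ s, (∃ p ∈ MBL, p.2 = s) ↔ (s < n ∧ ∀ c ∈ CB, c.2 ≠ s) := by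
    intro s
    constructor
    · rintro ⟨p, hp, rfl⟩
      exact (hM1mem p hp).2
    · rintro ⟨h1, h2⟩
      have : s ∈ MBL.image Prod.snd := by
        rw [hsndM1]
        simp only [freeC, Finset.mem_filter, Finset.mem_range]
        exact ⟨h1, h2⟩
      rw [Finset.mem_image] at this
      obtain ⟨p, hp, hpr⟩ := this
      exact ⟨p, hp, hpr⟩
  have hM2rows : ∀ r, (∃ p ∈ MTR, p.1 = r) ↔ (r < n ∧ ∀ c ∈ CB, c.1 ≠ r) := by
    intro r
    constructor
    · rintro ⟨p, hp, rfl⟩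
      exact (hM2mem p hp).1
    · rintro ⟨h1, h2⟩
      have : r ∈ MTR.image Prod.fst := by
        rw [hfstM2]
        simp only [freeR, Finset.mem_filter, Finset.mem_range]
        exact ⟨h1, h2⟩
      rw [Finset.mem_image] at this
      obtain ⟨p, hp, hpr⟩ := this
      exact ⟨p, hp, hpr⟩
  have hM2cols : ∀ s, (∃ p ∈ MTR, p.2 = s) ↔ (n ≤ s ∧ s < n + m ∧ ∀ c ∈ CA, c.2 + n ≠ s) := by
    intro s
    constructor
    · rintro ⟨p, hp, rfl⟩
      exact (hM2mem p hp).2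
    · rintro ⟨h1, h2, h3⟩
      have : s ∈ MTR.image Prod.snd := by
        rw [hsndM2, Finset.mem_image]
        refine ⟨s - n, ?_, by omega⟩
        simp only [freeC, Finset.mem_filter, Finset.mem_range]
        refine ⟨by omega, fun c hc he => h3 c hc (by omega)⟩
      rw [Finset.mem_image] at this
      obtain ⟨p, hp, hpr⟩ := this
      exact ⟨p, hp, hpr⟩
  -- the grid splits into four quadrants
  have hgrid : grid (m + n) (m + n)
      = ((range n ×ˢ range n ∪ range n ×ˢ Ico n (n + m))
          ∪ (Ico n (n + m) ×ˢ range n ∪ Ico n (n + m) ×ˢ Ico n (n + m))) := by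
    ext a
    simp only [grid, Finset.mem_union, Finset.mem_product, Finset.mem_range, Finset.mem_Ico]
    omega
  have hsplit : invStat (m + n) (m + n) C
      = ((range n ×ˢ range n).filter fun a =>
            (∀ c ∈ C, c.1 = a.1 → c.2 < a.2) ∧ (∀ c ∈ C, c.2 = a.2 → c.1 < a.1)).card
        + ((range n ×ˢ Ico n (n + m)).filter fun a =>
            (∀ c ∈ C, c.1 = a.1 → c.2 < a.2) ∧ (∀ c ∈ C, c.2 = a.2 → c.1 < a.1)).card
        + ((Ico n (n + m) ×ˢ range n).filter fun a =>
            (∀ c ∈ C, c.1 = a.1 → c.2 < a.2) ∧ (∀ c ∈ C, c.2 = a.2 → c.1 < a.1)).card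
        + ((Ico n (n + m) ×ˢ Ico n (n + m)).filter fun a =>
            (∀ c ∈ C, c.1 = a.1 → c.2 < a.2) ∧ (∀ c ∈ C, c.2 = a.2 → c.1 < a.1)).card := by
    have qd : ∀ (s t : Finset (ℕ × ℕ)), (∀ a : ℕ × ℕ, a ∈ s → a ∈ t → False) →
        Disjoint (s.filter fun a => (∀ c ∈ C, c.1 = a.1 → c.2 < a.2) ∧ (∀ c ∈ C, c.2 = a.2 → c.1 < a.1))
          (t.filter fun a => (∀ c ∈ C, c.1 = a.1 → c.2 < a.2) ∧ (∀ c ∈ C, c.2 = a.2 → c.1 < a.1)) := by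
      intro s t h
      apply Finset.disjoint_filter_filter ?_
      rw [Finset.disjoint_left]
      intro a ha ha'
      exact h a ha ha'
    have base : ∀ (s t : Finset ℕ) (u v : Finset ℕ), (∀ x, x ∈ s → x ∈ u → False) ∨ (∀ x, x ∈ t → x ∈ v → False) →
        ∀ a : ℕ × ℕ, a ∈ s ×ˢ t → a ∈ u ×ˢ v → False := by
      intro s t u v h a ha ha'
      rw [Finset.mem_product] at ha ha'
      rcases h with h | h
      · exact h a.1 ha.1 ha'.1
      · exact h a.2 ha.2 ha'.2
    have hrI : ∀ x : ℕ, x ∈ range n → x ∈ Ico n (n + m) → False := by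
      intro x h1 h2
      rw [Finset.mem_range] at h1
      rw [Finset.mem_Ico] at h2
      omega
    rw [invStat, hgrid, Finset.filter_union, Finset.filter_union, Finset.filter_union,
      Finset.card_union_of_disjoint (by
        rw [Finset.disjoint_union_left, Finset.disjoint_union_right, Finset.disjoint_union_right]
        exact ⟨⟨qd _ _ (base _ _ _ _ (Or.inl hrI)), qd _ _ (base _ _ _ _ (Or.inl hrI))⟩,
          ⟨qd _ _ (base _ _ _ _ (Or.inl hrI)), qd _ _ (base _ _ _ _ (Or.inl hrI))⟩⟩),
      Finset.card_union_of_disjoint (qd _ _ (base _ _ _ _ (Or.inr hrI))),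
      Finset.card_union_of_disjoint (qd _ _ (base _ _ _ _ (Or.inr hrI)))]
    omega
  have qTL : ((range n ×ˢ range n).filter fun a =>
      (∀ c ∈ C, c.1 = a.1 → c.2 < a.2) ∧ (∀ c ∈ C, c.2 = a.2 → c.1 < a.1)).card
      = invM CB := by
    rw [card_cells hrowB hcolB _ (fun u v => u.2 < v.2 ∧ v.1 < u.1) ?_]
    · rw [invM]
      apply Finset.card_nbij id
      · intro p hp
        simp only [Finset.mem_coe, Finset.mem_filter, Finset.mem_product, id_eq] at hp ⊢
        exact ⟨hp.1, hp.2.2, hp.2.1⟩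
      · intro p hp q hq h
        exact h
      · intro p hp
        simp only [Finset.mem_coe, Finset.mem_filter, Finset.mem_product, Set.mem_image] at hp ⊢
        exact ⟨p, ⟨hp.1, hp.2.2, hp.2.1⟩, rfl⟩
    · intro a
      simp only [Finset.mem_filter, Finset.mem_product, Finset.mem_range]
      constructor
      · rintro ⟨⟨ha1, ha2⟩, hP1, hP2⟩
        have hu : ∃ u ∈ CB, u.1 = a.1 := by
          by_contra hnu
          push_neg at hnu
          obtain ⟨p, hp, hp1⟩ := (hM2rows a.1).2 ⟨ha1, fun c hc => hnu c hc⟩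
          have hpC : p ∈ C := (memC p).2 (Or.inr (Or.inr (Or.inl hp)))
          have := hP1 p hpC hp1
          have := (hM2mem p hp).2.1
          omega
        have hv : ∃ v ∈ CB, v.2 = a.2 := by
          by_contra hnv
          push_neg at hnv
          obtain ⟨p, hp, hp2⟩ := (hM1cols a.2).2 ⟨ha2, fun c hc => hnv c hc⟩
          have hpC : p ∈ C := (memC p).2 (Or.inr (Or.inl hp))
          have := hP2 p hpC hp2
          have := (hM1mem p hp).1.1
          omega
        obtain ⟨u, hu, hu1⟩ := hu
        obtain ⟨v, hv, hv2⟩ := hv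
        have huC : u ∈ C := (memC u).2 (Or.inl hu)
        have hvC : v ∈ C := (memC v).2 (Or.inl hv)
        exact ⟨u, hu, v, hv, hu1, hv2, by rw [hv2]; exact hP1 u huC hu1,
          by rw [hu1]; exact hP2 v hvC hv2⟩
      · rintro ⟨u, hu, v, hv, hu1, hv2, hQ1, hQ2⟩
        obtain ⟨hun1, hun2⟩ := hCBg u hu
        obtain ⟨hvn1, hvn2⟩ := hCBg v hv
        refine ⟨⟨by omega, by omega⟩, ?_, ?_⟩
        · intro c hc he
          rcases (memC c).1 hc with h | h | h | ⟨x, hx, rfl⟩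
          · have : c = u := hrowB c h u hu (by rw [he, hu1])
            subst this
            omega
          · have := (hM1mem c h).1.1
            omega
          · have := (hM2mem c h).1.2 u hu
            rw [he, ← hu1] at this
            exact absurd rfl this
          · simp only at he
            omega
        · intro c hc he
          rcases (memC c).1 hc with h | h | h | ⟨x, hx, rfl⟩
          · have : c = v := hcolB c h v hv (by rw [he, hv2])
            subst this
            omega
          · have := (hM1mem c h).2.2 v hv
            rw [he, ← hv2] at this
            exact absurd rfl this
          · have := (hM2mem c h).2.1
            omega
          · simp only at he
            omega
  have qTR : ((range n ×ˢ Ico n (n + m)).filter fun a =>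
      (∀ c ∈ C, c.1 = a.1 → c.2 < a.2) ∧ (∀ c ∈ C, c.2 = a.2 → c.1 < a.1)).card
      = crossT n CB + invM MTR := by
    set F := (range n ×ˢ Ico n (n + m)).filter fun a =>
      (∀ c ∈ C, c.1 = a.1 → c.2 < a.2) ∧ (∀ c ∈ C, c.2 = a.2 → c.1 < a.1) with hF
    have hFsplit : F.card = (F.filter fun a => ∃ b ∈ CB, b.1 = a.1).card
        + (F.filter fun a => ¬ ∃ b ∈ CB, b.1 = a.1).card :=
      (Finset.card_filter_add_card_filter_not _).symm
    have hvcol : ∀ a : ℕ × ℕ, a.1 < n → n ≤ a.2 → a.2 < n + m →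
        (∀ c ∈ C, c.2 = a.2 → c.1 < a.1) → ∃ v ∈ MTR, v.2 = a.2 := by
      intro a h1 h2 h3 hP2
      apply (hM2cols a.2).2
      refine ⟨h2, h3, ?_⟩
      intro c hc he
      have hmem : (c.1 + n, c.2 + n) ∈ C := (memC _).2 (Or.inr (Or.inr (Or.inr ⟨c, hc, rfl⟩)))
      have h4 : (c.1 + n, c.2 + n).1 < a.1 := hP2 _ hmem he
      have h5 : c.1 + n < a.1 := h4
      omega
    have part1 : (F.filter fun a => ∃ b ∈ CB, b.1 = a.1).card = crossT n CB := by
      rw [card_cells hrowB hcolM2 _ (fun u v => v.1 < u.1) ?_]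
      · rw [crossT]
        apply Finset.card_bij (fun p _ => (p.2.1, p.1))
        · rintro ⟨u, v⟩ hp
          simp only [Finset.mem_filter, Finset.mem_product] at hp ⊢
          obtain ⟨⟨hu, hv⟩, hlt⟩ := hp
          have := hsubM2 hv
          rw [Finset.mem_product] at this
          exact ⟨⟨this.1, hu⟩, hlt⟩
        · rintro ⟨u, v⟩ hp ⟨u', v'⟩ hp' he
          simp only [Finset.mem_filter, Finset.mem_product] at hp hp'
          obtain ⟨e1, e2⟩ := Prod.mk.inj he
          have : v = v' := hrowM2 v hp.1.2 v' hp'.1.2 e1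
          rw [Prod.ext_iff]
          exact ⟨e2, this⟩
        · rintro ⟨t, b⟩ hp
          simp only [Finset.mem_filter, Finset.mem_product] at hp
          obtain ⟨⟨ht, hb⟩, hlt⟩ := hp
          have htv : t ∈ MTR.image Prod.fst := by rw [hfstM2]; exact ht
          rw [Finset.mem_image] at htv
          obtain ⟨v, hv, hv1⟩ := htv
          refine ⟨(b, v), ?_, ?_⟩
          · simp only [Finset.mem_filter, Finset.mem_product]
            exact ⟨⟨hb, hv⟩, by rw [hv1]; exact hlt⟩
          · rw [Prod.ext_iff]
            exact ⟨hv1, rfl⟩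
      · intro a
        simp only [hF, Finset.mem_filter, Finset.mem_product, Finset.mem_Ico, Finset.mem_range]
        constructor
        · rintro ⟨⟨⟨ha1, ha2, ha3⟩, hP1, hP2⟩, u, hu, hu1⟩
          obtain ⟨v, hv, hv2⟩ := hvcol a ha1 ha2 ha3 hP2
          have hvC : v ∈ C := (memC v).2 (Or.inr (Or.inr (Or.inl hv)))
          exact ⟨u, hu, v, hv, hu1, hv2, by rw [hu1]; exact hP2 v hvC hv2⟩
        · rintro ⟨u, hu, v, hv, hu1, hv2, hQ⟩
          obtain ⟨hun1, hun2⟩ := hCBg u hu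
          obtain ⟨⟨hv1a, hvfree⟩, hv2a, hv2b, hv2c⟩ := hM2mem v hv
          refine ⟨⟨⟨by omega, by omega, by omega⟩, ?_, ?_⟩, u, hu, hu1⟩
          · intro c hc he
            rcases (memC c).1 hc with h | h | h | ⟨x, hx, rfl⟩
            · have := (hCBg c h).2
              omega
            · have := (hM1mem c h).1.1
              omega
            · have := (hM2mem c h).1.2 u hu
              rw [he, ← hu1] at this
              exact absurd rfl this
            · have he' : x.1 + n = a.1 := he
              omega
          · intro c hc he
            rcases (memC c).1 hc with h | h | h | ⟨x, hx, rfl⟩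
            · have := (hCBg c h).2
              omega
            · have := (hM1mem c h).2.1
              omega
            · have : c = v := hcolM2 c h v hv (by rw [he, hv2])
              subst this
              omega
            · have he' : x.2 + n = a.2 := he
              rw [← hv2] at he'
              exact absurd he' (hv2c x hx)
    have part2 : (F.filter fun a => ¬ ∃ b ∈ CB, b.1 = a.1).card = invM MTR := by
      rw [card_cells hrowM2 hcolM2 _ (fun u v => u.2 < v.2 ∧ v.1 < u.1) ?_]
      · rw [invM]
        apply Finset.card_nbij id
        · intro p hp
          simp only [Finset.mem_coe, Finset.mem_filter, Finset.mem_product, id_eq] at hp ⊢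
          exact ⟨hp.1, hp.2.2, hp.2.1⟩
        · intro p hp q hq h
          exact h
        · intro p hp
          simp only [Finset.mem_coe, Finset.mem_filter, Finset.mem_product, Set.mem_image] at hp ⊢
          exact ⟨p, ⟨hp.1, hp.2.2, hp.2.1⟩, rfl⟩
      · intro a
        simp only [hF, Finset.mem_filter, Finset.mem_product, Finset.mem_Ico, Finset.mem_range]
        constructor
        · rintro ⟨⟨⟨ha1, ha2, ha3⟩, hP1, hP2⟩, hnr⟩
          have hu : ∃ u ∈ MTR, u.1 = a.1 := by
            apply (hM2rows a.1).2
            exact ⟨ha1, fun c hc he => hnr ⟨c, hc, he⟩⟩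
          obtain ⟨u, hu, hu1⟩ := hu
          obtain ⟨v, hv, hv2⟩ := hvcol a ha1 ha2 ha3 hP2
          have huC : u ∈ C := (memC u).2 (Or.inr (Or.inr (Or.inl hu)))
          have hvC : v ∈ C := (memC v).2 (Or.inr (Or.inr (Or.inl hv)))
          exact ⟨u, hu, v, hv, hu1, hv2, by rw [hv2]; exact hP1 u huC hu1,
            by rw [hu1]; exact hP2 v hvC hv2⟩
        · rintro ⟨u, hu, v, hv, hu1, hv2, hQ1, hQ2⟩
          obtain ⟨⟨hu1a, hufree⟩, hu2a, hu2b, hu2c⟩ := hM2mem u hu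
          obtain ⟨⟨hv1a, hvfree⟩, hv2a, hv2b, hv2c⟩ := hM2mem v hv
          refine ⟨⟨⟨by omega, by omega, by omega⟩, ?_, ?_⟩, ?_⟩
          · intro c hc he
            rcases (memC c).1 hc with h | h | h | ⟨x, hx, rfl⟩
            · have := hufree c h
              rw [he, ← hu1] at this
              exact absurd rfl this
            · have := (hM1mem c h).1.1
              omega
            · have : c = u := hrowM2 c h u hu (by rw [he, hu1])
              subst this
              omega
            · have he' : x.1 + n = a.1 := he
              omega
          · intro c hc he
            rcases (memC c).1 hc with h | h | h | ⟨x, hx, rfl⟩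
            · have := (hCBg c h).2
              omega
            · have := (hM1mem c h).2.1
              omega
            · have : c = v := hcolM2 c h v hv (by rw [he, hv2])
              subst this
              omega
            · have he' : x.2 + n = a.2 := he
              rw [← hv2] at he'
              exact absurd he' (hv2c x hx)
          · rintro ⟨b, hb, hb1⟩
            rw [← hu1] at hb1
            exact hufree b hb hb1
    rw [hFsplit, part1, part2]
  have qBL : ((Ico n (n + m) ×ˢ range n).filter fun a =>
      (∀ c ∈ C, c.1 = a.1 → c.2 < a.2) ∧ (∀ c ∈ C, c.2 = a.2 → c.1 < a.1)).card
      = crossB n CB + invM MBL := by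
    set F := (Ico n (n + m) ×ˢ range n).filter fun a =>
      (∀ c ∈ C, c.1 = a.1 → c.2 < a.2) ∧ (∀ c ∈ C, c.2 = a.2 → c.1 < a.1) with hF
    have hFsplit : F.card = (F.filter fun a => ∃ b ∈ CB, b.2 = a.2).card
        + (F.filter fun a => ¬ ∃ b ∈ CB, b.2 = a.2).card :=
      (Finset.card_filter_add_card_filter_not _).symm
    -- existence of the MBL rook in the row, from the row conditions
    have hurow : ∀ a : ℕ × ℕ, n ≤ a.1 → a.1 < n + m → a.2 < n →
        (∀ c ∈ C, c.1 = a.1 → c.2 < a.2) → ∃ u ∈ MBL, u.1 = a.1 := by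
      intro a h1 h2 h3 hP1
      apply (hM1rows a.1).2
      refine ⟨h1, h2, ?_⟩
      intro c hc he
      have hmem : (c.1 + n, c.2 + n) ∈ C := (memC _).2 (Or.inr (Or.inr (Or.inr ⟨c, hc, rfl⟩)))
      have h4 : (c.1 + n, c.2 + n).2 < a.2 := hP1 _ hmem he
      have h5 : c.2 + n < a.2 := h4
      omega
    have part1 : (F.filter fun a => ∃ b ∈ CB, b.2 = a.2).card = crossB n CB := by
      rw [card_cells hrowM1 hcolB _ (fun u v => u.2 < v.2) ?_]
      · rw [crossB]
        apply Finset.card_bij (fun p _ => (p.1.2, p.2))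
        · rintro ⟨u, v⟩ hp
          simp only [Finset.mem_filter, Finset.mem_product] at hp ⊢
          obtain ⟨⟨hu, hv⟩, hlt⟩ := hp
          have := hsubM1 hu
          rw [Finset.mem_product] at this
          exact ⟨⟨this.2, hv⟩, hlt⟩
        · rintro ⟨u, v⟩ hp ⟨u', v'⟩ hp' he
          simp only [Finset.mem_filter, Finset.mem_product] at hp hp'
          obtain ⟨e1, e2⟩ := Prod.mk.inj he
          have : u = u' := hcolM1 u hp.1.1 u' hp'.1.1 e1
          rw [Prod.ext_iff]
          exact ⟨this, e2⟩
        · rintro ⟨sv, b⟩ hp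
          simp only [Finset.mem_filter, Finset.mem_product] at hp
          obtain ⟨⟨hs, hb⟩, hlt⟩ := hp
          have hsv : sv ∈ MBL.image Prod.snd := by rw [hsndM1]; exact hs
          rw [Finset.mem_image] at hsv
          obtain ⟨u, hu, hu2⟩ := hsv
          refine ⟨(u, b), ?_, ?_⟩
          · simp only [Finset.mem_filter, Finset.mem_product]
            exact ⟨⟨hu, hb⟩, by rw [hu2]; exact hlt⟩
          · rw [Prod.ext_iff]
            exact ⟨hu2, rfl⟩
      · intro a
        simp only [hF, Finset.mem_filter, Finset.mem_product, Finset.mem_Ico, Finset.mem_range]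
        constructor
        · rintro ⟨⟨⟨⟨ha1, ha2⟩, ha3⟩, hP1, hP2⟩, v, hv, hv2⟩
          obtain ⟨u, hu, hu1⟩ := hurow a ha1 ha2 ha3 hP1
          have huC : u ∈ C := (memC u).2 (Or.inr (Or.inl hu))
          exact ⟨u, hu, v, hv, hu1, hv2, by rw [hv2]; exact hP1 u huC hu1⟩
        · rintro ⟨u, hu, v, hv, hu1, hv2, hQ⟩
          obtain ⟨⟨hu1a, hu1b, hufree⟩, hu2a, hu2b⟩ := hM1mem u hu
          obtain ⟨hvn1, hvn2⟩ := hCBg v hv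
          refine ⟨⟨⟨⟨by omega, by omega⟩, by omega⟩, ?_, ?_⟩, v, hv, hv2⟩
          · intro c hc he
            rcases (memC c).1 hc with h | h | h | ⟨x, hx, rfl⟩
            · have := (hCBg c h).1
              omega
            · have : c = u := hrowM1 c h u hu (by rw [he, hu1])
              subst this
              omega
            · have := (hM2mem c h).1.1
              omega
            · have he' : x.1 + n = a.1 := he
              rw [← hu1] at he'
              exact absurd he' (hufree x hx)
          · intro c hc he
            rcases (memC c).1 hc with h | h | h | ⟨x, hx, rfl⟩
            · have := (hCBg c h).1
              omega
            · have := (hM1mem c h).2.2 v hv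
              rw [he, ← hv2] at this
              exact absurd rfl this
            · have := (hM2mem c h).2.1
              omega
            · have he' : x.2 + n = a.2 := he
              omega
    have part2 : (F.filter fun a => ¬ ∃ b ∈ CB, b.2 = a.2).card = invM MBL := by
      rw [card_cells hrowM1 hcolM1 _ (fun u v => u.2 < v.2 ∧ v.1 < u.1) ?_]
      · rw [invM]
        apply Finset.card_nbij id
        · intro p hp
          simp only [Finset.mem_coe, Finset.mem_filter, Finset.mem_product, id_eq] at hp ⊢
          exact ⟨hp.1, hp.2.2, hp.2.1⟩
        · intro p hp q hq h
          exact h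
        · intro p hp
          simp only [Finset.mem_coe, Finset.mem_filter, Finset.mem_product, Set.mem_image] at hp ⊢
          exact ⟨p, ⟨hp.1, hp.2.2, hp.2.1⟩, rfl⟩
      · intro a
        simp only [hF, Finset.mem_filter, Finset.mem_product, Finset.mem_Ico, Finset.mem_range]
        constructor
        · rintro ⟨⟨⟨⟨ha1, ha2⟩, ha3⟩, hP1, hP2⟩, hnc⟩
          obtain ⟨u, hu, hu1⟩ := hurow a ha1 ha2 ha3 hP1
          have hv : ∃ v ∈ MBL, v.2 = a.2 := by
            apply (hM1cols a.2).2
            exact ⟨ha3, fun c hc he => hnc ⟨c, hc, he⟩⟩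
          obtain ⟨v, hv, hv2⟩ := hv
          have huC : u ∈ C := (memC u).2 (Or.inr (Or.inl hu))
          have hvC : v ∈ C := (memC v).2 (Or.inr (Or.inl hv))
          exact ⟨u, hu, v, hv, hu1, hv2, by rw [hv2]; exact hP1 u huC hu1,
            by rw [hu1]; exact hP2 v hvC hv2⟩
        · rintro ⟨u, hu, v, hv, hu1, hv2, hQ1, hQ2⟩
          obtain ⟨⟨hu1a, hu1b, hufree⟩, hu2a, hu2b⟩ := hM1mem u hu
          obtain ⟨⟨hv1a, hv1b, hvfree⟩, hv2a, hv2b⟩ := hM1mem v hv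
          refine ⟨⟨⟨⟨by omega, by omega⟩, by omega⟩, ?_, ?_⟩, ?_⟩
          · intro c hc he
            rcases (memC c).1 hc with h | h | h | ⟨x, hx, rfl⟩
            · have := (hCBg c h).1
              omega
            · have : c = u := hrowM1 c h u hu (by rw [he, hu1])
              subst this
              omega
            · have := (hM2mem c h).1.1
              omega
            · have he' : x.1 + n = a.1 := he
              rw [← hu1] at he'
              exact absurd he' (hufree x hx)
          · intro c hc he
            rcases (memC c).1 hc with h | h | h | ⟨x, hx, rfl⟩
            · have := hv2b c h
              rw [he, ← hv2] at this
              exact absurd rfl this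
            · have : c = v := hcolM1 c h v hv (by rw [he, hv2])
              subst this
              omega
            · have := (hM2mem c h).2.1
              omega
            · have he' : x.2 + n = a.2 := he
              omega
          · rintro ⟨b, hb, hb2⟩
            rw [← hv2] at hb2
            exact hv2b b hb hb2
    rw [hFsplit, part1, part2]
  have qBR : ((Ico n (n + m) ×ˢ Ico n (n + m)).filter fun a =>
      (∀ c ∈ C, c.1 = a.1 → c.2 < a.2) ∧ (∀ c ∈ C, c.2 = a.2 → c.1 < a.1)).card
      = invStat m m CA := by
    rw [invStat, eq_comm]
    apply Finset.card_bij (fun a _ => (a.1 + n, a.2 + n))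
    · intro a ha
      simp only [Finset.mem_filter, grid, Finset.mem_product, Finset.mem_range] at ha
      obtain ⟨⟨ha1, ha2⟩, hc1, hc2⟩ := ha
      simp only [Finset.mem_filter, Finset.mem_product, Finset.mem_Ico]
      refine ⟨⟨⟨by omega, by omega⟩, by omega, by omega⟩, ?_, ?_⟩
      · intro c hc he
        have he' : c.1 = a.1 + n := he
        show c.2 < a.2 + n
        rcases (memC c).1 hc with h | h | h | ⟨x, hx, rfl⟩
        · have := (hCBg c h).1
          omega
        · have := (hM1mem c h).2.1
          omega
        · have := (hM2mem c h).1.1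
          omega
        · have he2 : x.1 + n = a.1 + n := he'
          have hx1 : x.1 = a.1 := by omega
          have := hc1 x hx hx1
          show x.2 + n < a.2 + n
          omega
      · intro c hc he
        have he' : c.2 = a.2 + n := he
        show c.1 < a.1 + n
        rcases (memC c).1 hc with h | h | h | ⟨x, hx, rfl⟩
        · have := (hCBg c h).2
          omega
        · have := (hM1mem c h).2.1
          omega
        · have := (hM2mem c h).1.1
          omega
        · have he2 : x.2 + n = a.2 + n := he'
          have hx2 : x.2 = a.2 := by omega
          have := hc2 x hx hx2
          show x.1 + n < a.1 + n
          omega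
    · intro a ha a' ha' he
      obtain ⟨e1, e2⟩ := Prod.mk.inj he
      rw [Prod.ext_iff]
      omega
    · intro b hb
      simp only [Finset.mem_filter, Finset.mem_product, Finset.mem_Ico] at hb
      obtain ⟨⟨⟨hb1, hb2⟩, hb3, hb4⟩, hP1, hP2⟩ := hb
      refine ⟨(b.1 - n, b.2 - n), ?_, ?_⟩
      · simp only [Finset.mem_filter, grid, Finset.mem_product, Finset.mem_range]
        refine ⟨⟨by omega, by omega⟩, ?_, ?_⟩
        · intro c hc he
          have hmem : (c.1 + n, c.2 + n) ∈ C := (memC _).2 (Or.inr (Or.inr (Or.inr ⟨c, hc, rfl⟩)))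
          have h2 : (c.1 + n, c.2 + n).1 = b.1 := by
            show c.1 + n = b.1
            omega
          have h3 : (c.1 + n, c.2 + n).2 < b.2 := hP1 _ hmem h2
          have h4 : c.2 + n < b.2 := h3
          omega
        · intro c hc he
          have hmem : (c.1 + n, c.2 + n) ∈ C := (memC _).2 (Or.inr (Or.inr (Or.inr ⟨c, hc, rfl⟩)))
          have h2 : (c.1 + n, c.2 + n).2 = b.2 := by
            show c.2 + n = b.2
            omega
          have h3 : (c.1 + n, c.2 + n).1 < b.1 := hP2 _ hmem h2
          have h4 : c.1 + n < b.1 := h3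
          omega
      · rw [Prod.ext_iff]
        constructor <;> simp <;> omega
  rw [hsplit, qTL, qTR, qBL, qBR]
  omega

end QRB
namespace QRB
open Finset

def dTL (n : ℕ) (C : Board) : Board := C.filter fun c => c.1 < n ∧ c.2 < n
def dTR (n : ℕ) (C : Board) : Board := C.filter fun c => c.1 < n ∧ n ≤ c.2
def dBL (n : ℕ) (C : Board) : Board := C.filter fun c => n ≤ c.1 ∧ c.2 < n
def dBR (n : ℕ) (C : Board) : Board :=
  (C.filter fun c => n ≤ c.1 ∧ n ≤ c.2).image fun c => (c.1 - n, c.2 - n)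

lemma mem_blockSharp {n m : ℕ} {B A : Board} {c : ℕ × ℕ} :
    c ∈ blockSharp n m B A ↔ c ∈ B ∨ (c.1 < n ∧ n ≤ c.2 ∧ c.2 < n + m)
      ∨ (n ≤ c.1 ∧ c.1 < n + m ∧ c.2 < n) ∨ ∃ x ∈ A, (x.1 + n, x.2 + n) = c := by
  simp only [blockSharp, Finset.mem_union, Finset.mem_product, Finset.mem_Ico,
    Finset.mem_range, Finset.mem_image, or_assoc]
  constructor
  · rintro (h | ⟨h1, h2⟩ | ⟨h1, h2⟩ | ⟨x, hx, he⟩)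
    · exact Or.inl h
    · exact Or.inr (Or.inl ⟨h1, h2.1, h2.2⟩)
    · exact Or.inr (Or.inr (Or.inl ⟨h1.1, h1.2, h2⟩))
    · exact Or.inr (Or.inr (Or.inr ⟨x, hx, he⟩))
  · rintro (h | ⟨h1, h2, h3⟩ | ⟨h1, h2, h3⟩ | ⟨x, hx, he⟩)
    · exact Or.inl h
    · exact Or.inr (Or.inl ⟨h1, h2, h3⟩)
    · exact Or.inr (Or.inr (Or.inl ⟨⟨h1, h2⟩, h3⟩))
    · exact Or.inr (Or.inr (Or.inr ⟨x, hx, he⟩))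

lemma decompose {m n : ℕ} {A B C : Board}
    (hAg : ∀ c ∈ A, c.1 < m ∧ c.2 < m) (hBg : ∀ c ∈ B, c.1 < n ∧ c.2 < n)
    (hC : C ∈ rookConfigs (blockSharp n m B A) (m + n)) :
    (dBL n C).card ≤ m ∧ (dBL n C).card ≤ n ∧
    dBR n C ∈ rookConfigs A (m - (dBL n C).card) ∧
    dTL n C ∈ rookConfigs B (n - (dBL n C).card) ∧
    dBL n C ∈ matchings ((freeR m (dBR n C)).image (· + n)) (freeC n (dTL n C)) ∧
    dTR n C ∈ matchings (freeR n (dTL n C)) ((freeC m (dBR n C)).image (· + n)) ∧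
    combine n (dTL n C) (dBR n C) (dBL n C) (dTR n C) = C := by
  classical
  obtain ⟨hsub, hcard, hna⟩ := mem_rookConfigs.1 hC
  have hrowI := rowInj hna
  have hcolI := colInj hna
  have hCg : ∀ c ∈ C, c.1 < n + m ∧ c.2 < n + m := by
    intro c hc
    rcases mem_blockSharp.1 (hsub hc) with h | ⟨h1, h2, h3⟩ | ⟨h1, h2, h3⟩ | ⟨x, hx, he⟩
    · obtain ⟨u, v⟩ := hBg c h
      omega
    · omega
    · omega
    · obtain ⟨u, v⟩ := hAg x hx
      rw [← he]
      constructor <;> (show _ < n + m) <;> omega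
  -- every row and column is used
  have himgrow : C.image Prod.fst = range (n + m) := by
    apply Finset.eq_of_subset_of_card_le
    · intro r hr
      rw [Finset.mem_image] at hr
      obtain ⟨c, hc, rfl⟩ := hr
      exact Finset.mem_range.2 (hCg c hc).1
    · rw [Finset.card_range, Finset.card_image_of_injOn, hcard]
      · omega
      · intro p hp q hq h
        exact hrowI p (by simpa using hp) q (by simpa using hq) h
  have himgcol : C.image Prod.snd = range (n + m) := by
    apply Finset.eq_of_subset_of_card_le
    · intro r hr
      rw [Finset.mem_image] at hr
      obtain ⟨c, hc, rfl⟩ := hr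
      exact Finset.mem_range.2 (hCg c hc).2
    · rw [Finset.card_range, Finset.card_image_of_injOn, hcard]
      · omega
      · intro p hp q hq h
        exact hcolI p (by simpa using hp) q (by simpa using hq) h
  have hrows : ∀ r, r < n + m → ∃ c ∈ C, c.1 = r := by
    intro r hr
    have : r ∈ C.image Prod.fst := by rw [himgrow]; exact Finset.mem_range.2 hr
    rw [Finset.mem_image] at this
    obtain ⟨c, hc, hcr⟩ := this
    exact ⟨c, hc, hcr⟩
  have hcols : ∀ s, s < n + m → ∃ c ∈ C, c.2 = s := by
    intro s hs
    have : s ∈ C.image Prod.snd := by rw [himgcol]; exact Finset.mem_range.2 hs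
    rw [Finset.mem_image] at this
    obtain ⟨c, hc, hcs⟩ := this
    exact ⟨c, hc, hcs⟩
  -- counting rows/columns in the two bands
  have hbandrow : (C.filter fun c => c.1 < n).card = n := by
    have himg : (C.filter fun c => c.1 < n).image Prod.fst = range n := by
      apply Finset.Subset.antisymm
      · intro r hr
        rw [Finset.mem_image] at hr
        obtain ⟨c, hc, rfl⟩ := hr
        exact Finset.mem_range.2 (Finset.mem_filter.1 hc).2
      · intro r hr
        rw [Finset.mem_range] at hr
        obtain ⟨c, hc, rfl⟩ := hrows r (by omega)
        exact Finset.mem_image_of_mem _ (Finset.mem_filter.2 ⟨hc, hr⟩)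
    have hinj : Set.InjOn Prod.fst ((C.filter fun c => c.1 < n) : Set (ℕ × ℕ)) := by
      intro p hp q hq h
      exact hrowI p (Finset.mem_of_mem_filter p (Finset.mem_coe.1 hp))
        q (Finset.mem_of_mem_filter q (Finset.mem_coe.1 hq)) h
    calc (C.filter fun c => c.1 < n).card
        = ((C.filter fun c => c.1 < n).image Prod.fst).card :=
          (Finset.card_image_of_injOn hinj).symm
      _ = n := by rw [himg, Finset.card_range]
  have hbandcol : (C.filter fun c => c.2 < n).card = n := by
    have himg : (C.filter fun c => c.2 < n).image Prod.snd = range n := by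
      apply Finset.Subset.antisymm
      · intro r hr
        rw [Finset.mem_image] at hr
        obtain ⟨c, hc, rfl⟩ := hr
        exact Finset.mem_range.2 (Finset.mem_filter.1 hc).2
      · intro r hr
        rw [Finset.mem_range] at hr
        obtain ⟨c, hc, rfl⟩ := hcols r (by omega)
        exact Finset.mem_image_of_mem _ (Finset.mem_filter.2 ⟨hc, hr⟩)
    have hinj : Set.InjOn Prod.snd ((C.filter fun c => c.2 < n) : Set (ℕ × ℕ)) := by
      intro p hp q hq h
      exact hcolI p (Finset.mem_of_mem_filter p (Finset.mem_coe.1 hp))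
        q (Finset.mem_of_mem_filter q (Finset.mem_coe.1 hq)) h
    calc (C.filter fun c => c.2 < n).card
        = ((C.filter fun c => c.2 < n).image Prod.snd).card :=
          (Finset.card_image_of_injOn hinj).symm
      _ = n := by rw [himg, Finset.card_range]
  -- splitting the bands
  have hsplitrow : (C.filter fun c => c.1 < n).card = (dTL n C).card + (dTR n C).card := by
    rw [← Finset.card_filter_add_card_filter_not (s := C.filter fun c => c.1 < n)
      (p := fun c => c.2 < n)]
    congr 1
    · rw [Finset.filter_filter, dTL]
    · rw [Finset.filter_filter, dTR]
      apply congrArg Finset.card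
      apply Finset.filter_congr
      intro c _
      constructor
      · rintro ⟨h1, h2⟩; exact ⟨h1, by omega⟩
      · rintro ⟨h1, h2⟩; exact ⟨h1, by omega⟩
  have hsplitcol : (C.filter fun c => c.2 < n).card = (dTL n C).card + (dBL n C).card := by
    rw [← Finset.card_filter_add_card_filter_not (s := C.filter fun c => c.2 < n)
      (p := fun c => c.1 < n)]
    congr 1
    · rw [Finset.filter_filter, dTL]
      apply congrArg Finset.card
      apply Finset.filter_congr
      intro c _
      exact ⟨fun ⟨h1, h2⟩ => ⟨h2, h1⟩, fun ⟨h1, h2⟩ => ⟨h2, h1⟩⟩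
    · rw [Finset.filter_filter, dBL]
      apply congrArg Finset.card
      apply Finset.filter_congr
      intro c _
      constructor
      · rintro ⟨h1, h2⟩; exact ⟨by omega, h1⟩
      · rintro ⟨h1, h2⟩; exact ⟨h2, by omega⟩
  have hsplitall : C.card = (C.filter fun c => c.1 < n).card
      + ((C.filter fun c => n ≤ c.1 ∧ c.2 < n).card
        + (C.filter fun c => n ≤ c.1 ∧ n ≤ c.2).card) := by
    rw [← Finset.card_filter_add_card_filter_not (s := C) (p := fun c => c.1 < n)]
    congr 1
    rw [← Finset.card_filter_add_card_filter_not
      (s := C.filter fun c => ¬ c.1 < n) (p := fun c => c.2 < n)]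
    congr 1
    · rw [Finset.filter_filter]
      apply congrArg Finset.card
      apply Finset.filter_congr
      intro c _
      constructor
      · rintro ⟨h1, h2⟩; exact ⟨by omega, h2⟩
      · rintro ⟨h1, h2⟩; exact ⟨by omega, h2⟩
    · rw [Finset.filter_filter]
      apply congrArg Finset.card
      apply Finset.filter_congr
      intro c _
      constructor
      · rintro ⟨h1, h2⟩; exact ⟨by omega, by omega⟩
      · rintro ⟨h1, h2⟩; exact ⟨by omega, by omega⟩
  have hdBLeq : dBL n C = C.filter fun c => n ≤ c.1 ∧ c.2 < n := rfl
  rw [hcard, ← hdBLeq] at hsplitall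
  set i := (dBL n C).card with hidef
  have hBRpre_inj : ∀ p ∈ C.filter fun c => n ≤ c.1 ∧ n ≤ c.2,
      ∀ q ∈ C.filter fun c => n ≤ c.1 ∧ n ≤ c.2,
      (p.1 - n, p.2 - n) = (q.1 - n, q.2 - n) → p = q := by
    intro p hp q hq h
    rw [Finset.mem_filter] at hp hq
    obtain ⟨e1, e2⟩ := Prod.mk.inj h
    rw [Prod.ext_iff]
    constructor <;> omega
  have hcardBRpre : (C.filter fun c => n ≤ c.1 ∧ n ≤ c.2).card = m - i := by omega
  have hcardBR : (dBR n C).card = m - i := by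
    rw [dBR, Finset.card_image_of_injOn, hcardBRpre]
    intro p hp q hq h
    exact hBRpre_inj p (by simpa using hp) q (by simpa using hq) h
  have hcardTL : (dTL n C).card = n - i := by omega
  have hcardTR : (dTR n C).card = i := by omega
  have him : i ≤ m := by omega
  have hin : i ≤ n := by omega
  -- membership of dBR in A-preimage
  have hBRpreA : ∀ c ∈ C, n ≤ c.1 → n ≤ c.2 → ∃ x ∈ A, (x.1 + n, x.2 + n) = c := by
    intro c hc h1 h2
    rcases mem_blockSharp.1 (hsub hc) with h | ⟨u1, u2, u3⟩ | ⟨u1, u2, u3⟩ | ⟨x, hx, he⟩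
    · obtain ⟨v1, v2⟩ := hBg c h
      omega
    · omega
    · omega
    · exact ⟨x, hx, he⟩
  have hdBRA : ∀ x ∈ dBR n C, x ∈ A ∧ (x.1 + n, x.2 + n) ∈ C := by
    intro x hx
    rw [dBR, Finset.mem_image] at hx
    obtain ⟨c, hc, rfl⟩ := hx
    rw [Finset.mem_filter] at hc
    obtain ⟨hcC, h1, h2⟩ := hc
    obtain ⟨y, hy, hye⟩ := hBRpreA c hcC h1 h2
    have he1 : y.1 + n = c.1 := congrArg Prod.fst hye
    have he2 : y.2 + n = c.2 := congrArg Prod.snd hye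
    have : (c.1 - n, c.2 - n) = y := by
      rw [Prod.ext_iff]
      constructor <;> omega
    rw [this]
    refine ⟨hy, ?_⟩
    rw [hye]
    exact hcC
  -- (b) the bottom-right part is a rook configuration on A
  have hbr : dBR n C ∈ rookConfigs A (m - i) := by
    rw [mem_rookConfigs]
    refine ⟨fun x hx => (hdBRA x hx).1, hcardBR, ?_⟩
    intro c hc c' hc' hne
    rw [dBR, Finset.mem_image] at hc hc'
    obtain ⟨d, hd, rfl⟩ := hc
    obtain ⟨d', hd', rfl⟩ := hc'
    rw [Finset.mem_filter] at hd hd'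
    have hdd : d ≠ d' := fun h => hne (by rw [h])
    have := hna d hd.1 d' hd'.1 hdd
    have h1 := hd.2.1
    have h2 := hd.2.2
    have h3 := hd'.2.1
    have h4 := hd'.2.2
    constructor
    · show d.1 - n ≠ d'.1 - n
      omega
    · show d.2 - n ≠ d'.2 - n
      omega
  -- (c) the top-left part is a rook configuration on B
  have htl : dTL n C ∈ rookConfigs B (n - i) := by
    rw [mem_rookConfigs]
    refine ⟨?_, hcardTL, ?_⟩
    · intro c hc
      rw [dTL, Finset.mem_filter] at hc
      obtain ⟨hcC, h1, h2⟩ := hc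
      rcases mem_blockSharp.1 (hsub hcC) with h | ⟨u1, u2, u3⟩ | ⟨u1, u2, u3⟩ | ⟨x, hx, he⟩
      · exact h
      · omega
      · omega
      · exfalso
        have : x.1 + n = c.1 := congrArg Prod.fst he
        omega
    · intro c hc c' hc' hne
      exact hna c (Finset.mem_of_mem_filter c hc) c' (Finset.mem_of_mem_filter c' hc') hne
  obtain ⟨hbrsub, hbrcard, hbrna⟩ := mem_rookConfigs.1 hbr
  obtain ⟨htlsub, htlcard, htlna⟩ := mem_rookConfigs.1 htl
  have hbrg : ∀ x ∈ dBR n C, x.1 < m ∧ x.2 < m := fun x hx => hAg x (hbrsub hx)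
  have htlg : ∀ x ∈ dTL n C, x.1 < n ∧ x.2 < n := by
    intro x hx
    rw [dTL, Finset.mem_filter] at hx
    exact hx.2
  have hfreeRBR : (freeR m (dBR n C)).card = i :=
    freeR_card (fun x hx => (hbrg x hx).1) (rowInj hbrna) hbrcard him
  have hfreeCBR : (freeC m (dBR n C)).card = i :=
    freeC_card (fun x hx => (hbrg x hx).2) (colInj hbrna) hbrcard him
  have hfreeRTL : (freeR n (dTL n C)).card = i :=
    freeR_card (fun x hx => (htlg x hx).1) (rowInj htlna) htlcard hin
  have hfreeCTL : (freeC n (dTL n C)).card = i :=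
    freeC_card (fun x hx => (htlg x hx).2) (colInj htlna) htlcard hin
  have haddinj : Function.Injective (· + n : ℕ → ℕ) := add_left_injective n
  -- (d) the bottom-left part is a matching
  have hdBLrow : ∀ p ∈ dBL n C, p.1 ∈ (freeR m (dBR n C)).image (· + n) := by
    intro p hp
    rw [dBL, Finset.mem_filter] at hp
    obtain ⟨hpC, h1, h2⟩ := hp
    have hb := (hCg p hpC).1
    rw [Finset.mem_image]
    refine ⟨p.1 - n, ?_, by omega⟩
    simp only [freeR, Finset.mem_filter, Finset.mem_range]
    refine ⟨by omega, ?_⟩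
    intro x hx he
    have hx2 := (hdBRA x hx).2
    have hxp : (x.1 + n, x.2 + n) = p := hrowI _ hx2 p hpC (by show x.1 + n = p.1; omega)
    have : x.2 + n = p.2 := congrArg Prod.snd hxp
    omega
  have hdBLcol : ∀ p ∈ dBL n C, p.2 ∈ freeC n (dTL n C) := by
    intro p hp
    rw [dBL, Finset.mem_filter] at hp
    obtain ⟨hpC, h1, h2⟩ := hp
    simp only [freeC, Finset.mem_filter, Finset.mem_range]
    refine ⟨h2, ?_⟩
    intro x hx he
    rw [dTL, Finset.mem_filter] at hx
    have : x = p := hcolI x hx.1 p hpC he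
    subst this
    omega
  have hm1 : dBL n C ∈ matchings ((freeR m (dBR n C)).image (· + n)) (freeC n (dTL n C)) := by
    rw [mem_matchings]
    have hfstsub : (dBL n C).image Prod.fst ⊆ (freeR m (dBR n C)).image (· + n) := by
      intro r hr
      rw [Finset.mem_image] at hr
      obtain ⟨p, hp, rfl⟩ := hr
      exact hdBLrow p hp
    have hsndsub : (dBL n C).image Prod.snd ⊆ freeC n (dTL n C) := by
      intro r hr
      rw [Finset.mem_image] at hr
      obtain ⟨p, hp, rfl⟩ := hr
      exact hdBLcol p hp
    have hRcard : ((freeR m (dBR n C)).image (· + n)).card = i := by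
      rw [Finset.card_image_of_injective _ haddinj, hfreeRBR]
    have hfstcard : ((dBL n C).image Prod.fst).card = i := by
      rw [Finset.card_image_of_injOn]
      intro p hp q hq h
      exact hrowI p (Finset.mem_of_mem_filter p (Finset.mem_coe.1 hp))
        q (Finset.mem_of_mem_filter q (Finset.mem_coe.1 hq)) h
    have hsndcard : ((dBL n C).image Prod.snd).card = i := by
      rw [Finset.card_image_of_injOn]
      intro p hp q hq h
      exact hcolI p (Finset.mem_of_mem_filter p (Finset.mem_coe.1 hp))
        q (Finset.mem_of_mem_filter q (Finset.mem_coe.1 hq)) h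
    refine ⟨?_, by rw [hRcard, ← hidef], ?_, ?_⟩
    · intro p hp
      rw [Finset.mem_product]
      exact ⟨hdBLrow p hp, hdBLcol p hp⟩
    · exact Finset.eq_of_subset_of_card_le hfstsub (by rw [hRcard, hfstcard])
    · exact Finset.eq_of_subset_of_card_le hsndsub (by rw [hfreeCTL, hsndcard])
  -- (e) the top-right part is a matching
  have hdTRrow : ∀ p ∈ dTR n C, p.1 ∈ freeR n (dTL n C) := by
    intro p hp
    rw [dTR, Finset.mem_filter] at hp
    obtain ⟨hpC, h1, h2⟩ := hp
    simp only [freeR, Finset.mem_filter, Finset.mem_range]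
    refine ⟨h1, ?_⟩
    intro x hx he
    rw [dTL, Finset.mem_filter] at hx
    have : x = p := hrowI x hx.1 p hpC he
    subst this
    omega
  have hdTRcol : ∀ p ∈ dTR n C, p.2 ∈ (freeC m (dBR n C)).image (· + n) := by
    intro p hp
    rw [dTR, Finset.mem_filter] at hp
    obtain ⟨hpC, h1, h2⟩ := hp
    have hb := (hCg p hpC).2
    rw [Finset.mem_image]
    refine ⟨p.2 - n, ?_, by omega⟩
    simp only [freeC, Finset.mem_filter, Finset.mem_range]
    refine ⟨by omega, ?_⟩
    intro x hx he
    have hx2 := (hdBRA x hx).2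
    have hxp : (x.1 + n, x.2 + n) = p := hcolI _ hx2 p hpC (by show x.2 + n = p.2; omega)
    have : x.1 + n = p.1 := congrArg Prod.fst hxp
    omega
  have hm2 : dTR n C ∈ matchings (freeR n (dTL n C)) ((freeC m (dBR n C)).image (· + n)) := by
    rw [mem_matchings]
    have hfstsub : (dTR n C).image Prod.fst ⊆ freeR n (dTL n C) := by
      intro r hr
      rw [Finset.mem_image] at hr
      obtain ⟨p, hp, rfl⟩ := hr
      exact hdTRrow p hp
    have hsndsub : (dTR n C).image Prod.snd ⊆ (freeC m (dBR n C)).image (· + n) := by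
      intro r hr
      rw [Finset.mem_image] at hr
      obtain ⟨p, hp, rfl⟩ := hr
      exact hdTRcol p hp
    have hScard : ((freeC m (dBR n C)).image (· + n)).card = i := by
      rw [Finset.card_image_of_injective _ haddinj, hfreeCBR]
    have hfstcard : ((dTR n C).image Prod.fst).card = i := by
      rw [Finset.card_image_of_injOn, hcardTR]
      intro p hp q hq h
      exact hrowI p (Finset.mem_of_mem_filter p (Finset.mem_coe.1 hp))
        q (Finset.mem_of_mem_filter q (Finset.mem_coe.1 hq)) h
    have hsndcard : ((dTR n C).image Prod.snd).card = i := by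
      rw [Finset.card_image_of_injOn, hcardTR]
      intro p hp q hq h
      exact hcolI p (Finset.mem_of_mem_filter p (Finset.mem_coe.1 hp))
        q (Finset.mem_of_mem_filter q (Finset.mem_coe.1 hq)) h
    refine ⟨?_, by rw [hfreeRTL, hcardTR], ?_, ?_⟩
    · intro p hp
      rw [Finset.mem_product]
      exact ⟨hdTRrow p hp, hdTRcol p hp⟩
    · exact Finset.eq_of_subset_of_card_le hfstsub (by rw [hfreeRTL, hfstcard])
    · exact Finset.eq_of_subset_of_card_le hsndsub (by rw [hScard, hsndcard])
  -- (f) recombination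
  have hcomb : combine n (dTL n C) (dBR n C) (dBL n C) (dTR n C) = C := by
    ext c
    simp only [combine, shiftB, Finset.mem_union, Finset.mem_image]
    constructor
    · rintro (((h | h) | h) | ⟨x, hx, rfl⟩)
      · exact Finset.mem_of_mem_filter c h
      · exact Finset.mem_of_mem_filter c h
      · exact Finset.mem_of_mem_filter c h
      · exact (hdBRA x hx).2
    · intro hc
      obtain ⟨hb1, hb2⟩ := hCg c hc
      by_cases h1 : c.1 < n
      · by_cases h2 : c.2 < n
        · exact Or.inl (Or.inl (Or.inl (Finset.mem_filter.2 ⟨hc, h1, h2⟩)))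
        · exact Or.inl (Or.inr (Finset.mem_filter.2 ⟨hc, h1, by omega⟩))
      · by_cases h2 : c.2 < n
        · exact Or.inl (Or.inl (Or.inr (Finset.mem_filter.2 ⟨hc, by omega, h2⟩)))
        · refine Or.inr ⟨(c.1 - n, c.2 - n), ?_, ?_⟩
          · rw [dBR, Finset.mem_image]
            exact ⟨c, Finset.mem_filter.2 ⟨hc, by omega, by omega⟩, rfl⟩
          · rw [Prod.ext_iff]
            constructor
            · show c.1 - n + n = c.1
              omega
            · show c.2 - n + n = c.2
              omega
  exact ⟨him, hin, hbr, htl, hm1, hm2, hcomb⟩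

end QRB
namespace QRB
open Finset

lemma recombine {m n i : ℕ} {A B CA CB MBL MTR : Board}
    (hAg : ∀ c ∈ A, c.1 < m ∧ c.2 < m) (hBg : ∀ c ∈ B, c.1 < n ∧ c.2 < n)
    (him : i ≤ m) (hin : i ≤ n)
    (hCA : CA ∈ rookConfigs A (m - i)) (hCB : CB ∈ rookConfigs B (n - i))
    (hM1 : MBL ∈ matchings ((freeR m CA).image (· + n)) (freeC n CB))
    (hM2 : MTR ∈ matchings (freeR n CB) ((freeC m CA).image (· + n))) :
    combine n CB CA MBL MTR ∈ rookConfigs (blockSharp n m B A) (m + n) ∧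
    dTL n (combine n CB CA MBL MTR) = CB ∧
    dBL n (combine n CB CA MBL MTR) = MBL ∧
    dTR n (combine n CB CA MBL MTR) = MTR ∧
    dBR n (combine n CB CA MBL MTR) = CA ∧
    (dBL n (combine n CB CA MBL MTR)).card = i := by
  classical
  obtain ⟨hCAsub, hcardA, hnaA⟩ := mem_rookConfigs.1 hCA
  obtain ⟨hCBsub, hcardB, hnaB⟩ := mem_rookConfigs.1 hCB
  have hCAg : ∀ c ∈ CA, c.1 < m ∧ c.2 < m := fun c hc => hAg c (hCAsub hc)
  have hCBg : ∀ c ∈ CB, c.1 < n ∧ c.2 < n := fun c hc => hBg c (hCBsub hc)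
  have hrowA := rowInj hnaA
  have hcolA := colInj hnaA
  have hrowB := rowInj hnaB
  have hcolB := colInj hnaB
  obtain ⟨hsubM1, hcardM1, hfstM1, hsndM1⟩ := mem_matchings.1 hM1
  obtain ⟨hsubM2, hcardM2, hfstM2, hsndM2⟩ := mem_matchings.1 hM2
  have haddinj : Function.Injective (· + n : ℕ → ℕ) := add_left_injective n
  have hcfR : ((freeR m CA).image (· + n)).card = i := by
    rw [Finset.card_image_of_injective _ haddinj,
      freeR_card (fun c hc => (hCAg c hc).1) hrowA hcardA him]
  have hcfC : (freeC n CB).card = i :=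
    freeC_card (fun c hc => (hCBg c hc).2) hcolB hcardB hin
  have hcfRB : (freeR n CB).card = i :=
    freeR_card (fun c hc => (hCBg c hc).1) hrowB hcardB hin
  have hcfCA : ((freeC m CA).image (· + n)).card = i := by
    rw [Finset.card_image_of_injective _ haddinj,
      freeC_card (fun c hc => (hCAg c hc).2) hcolA hcardA him]
  have hrowM1 := matchings_rowInj hM1
  have hcolM1 := matchings_colInj (by rw [hcfC, hcfR]) hM1
  have hrowM2 := matchings_rowInj hM2
  have hcolM2 := matchings_colInj (by rw [hcfCA, hcfRB]) hM2
  have hM1mem : ∀ p ∈ MBL, (n ≤ p.1 ∧ p.1 < n + m ∧ ∀ c ∈ CA, c.1 + n ≠ p.1)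
      ∧ (p.2 < n ∧ ∀ c ∈ CB, c.2 ≠ p.2) := by
    intro p hp
    have := hsubM1 hp
    rw [Finset.mem_product] at this
    obtain ⟨h1, h2⟩ := this
    rw [Finset.mem_image] at h1
    obtain ⟨x, hx, hxp⟩ := h1
    simp only [freeR, Finset.mem_filter, Finset.mem_range] at hx
    simp only [freeC, Finset.mem_filter, Finset.mem_range] at h2
    refine ⟨⟨by omega, by omega, ?_⟩, h2.1, h2.2⟩
    intro c hc he
    exact hx.2 c hc (by omega)
  have hM2mem : ∀ p ∈ MTR, (p.1 < n ∧ ∀ c ∈ CB, c.1 ≠ p.1)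
      ∧ (n ≤ p.2 ∧ p.2 < n + m ∧ ∀ c ∈ CA, c.2 + n ≠ p.2) := by
    intro p hp
    have := hsubM2 hp
    rw [Finset.mem_product] at this
    obtain ⟨h1, h2⟩ := this
    rw [Finset.mem_image] at h2
    obtain ⟨x, hx, hxp⟩ := h2
    simp only [freeR, Finset.mem_filter, Finset.mem_range] at h1
    simp only [freeC, Finset.mem_filter, Finset.mem_range] at hx
    refine ⟨⟨h1.1, h1.2⟩, by omega, by omega, ?_⟩
    intro c hc he
    exact hx.2 c hc (by omega)
  have memC : ∀ c, c ∈ combine n CB CA MBL MTR ↔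
      c ∈ CB ∨ c ∈ MBL ∨ c ∈ MTR ∨ ∃ x ∈ CA, (x.1 + n, x.2 + n) = c := by
    intro c
    simp [combine, shiftB, Finset.mem_union, Finset.mem_image, or_assoc]
  -- the four components of the decomposition
  have h1 : dTL n (combine n CB CA MBL MTR) = CB := by
    ext c
    rw [dTL, Finset.mem_filter]
    constructor
    · rintro ⟨hc, hb1, hb2⟩
      rcases (memC c).1 hc with h | h | h | ⟨x, hx, rfl⟩
      · exact h
      · have := (hM1mem c h).1.1
        omega
      · have := (hM2mem c h).2.1
        omega
      · exfalso
        have : x.1 + n = (x.1 + n, x.2 + n).1 := rfl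
        omega
    · intro h
      exact ⟨(memC c).2 (Or.inl h), (hCBg c h).1, (hCBg c h).2⟩
  have h2 : dBL n (combine n CB CA MBL MTR) = MBL := by
    ext c
    rw [dBL, Finset.mem_filter]
    constructor
    · rintro ⟨hc, hb1, hb2⟩
      rcases (memC c).1 hc with h | h | h | ⟨x, hx, rfl⟩
      · have := (hCBg c h).1
        omega
      · exact h
      · have := (hM2mem c h).1.1
        omega
      · exfalso
        have : (x.1 + n, x.2 + n).2 = x.2 + n := rfl
        omega
    · intro h
      obtain ⟨⟨u1, u2, u3⟩, v1, v2⟩ := hM1mem c h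
      exact ⟨(memC c).2 (Or.inr (Or.inl h)), u1, v1⟩
  have h3 : dTR n (combine n CB CA MBL MTR) = MTR := by
    ext c
    rw [dTR, Finset.mem_filter]
    constructor
    · rintro ⟨hc, hb1, hb2⟩
      rcases (memC c).1 hc with h | h | h | ⟨x, hx, rfl⟩
      · have := (hCBg c h).2
        omega
      · have := (hM1mem c h).1.1
        omega
      · exact h
      · exfalso
        have : (x.1 + n, x.2 + n).1 = x.1 + n := rfl
        omega
    · intro h
      obtain ⟨⟨u1, u2⟩, v1, v2, v3⟩ := hM2mem c h
      exact ⟨(memC c).2 (Or.inr (Or.inr (Or.inl h))), u1, v1⟩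
  have h4 : dBR n (combine n CB CA MBL MTR) = CA := by
    have hfil : (combine n CB CA MBL MTR).filter (fun c => n ≤ c.1 ∧ n ≤ c.2)
        = shiftB n CA := by
      ext c
      rw [Finset.mem_filter, shiftB, Finset.mem_image]
      constructor
      · rintro ⟨hc, hb1, hb2⟩
        rcases (memC c).1 hc with h | h | h | ⟨x, hx, he⟩
        · have := (hCBg c h).1
          omega
        · have := (hM1mem c h).2.1
          omega
        · have := (hM2mem c h).1.1
          omega
        · exact ⟨x, hx, he⟩
      · rintro ⟨x, hx, rfl⟩
        refine ⟨(memC _).2 (Or.inr (Or.inr (Or.inr ⟨x, hx, rfl⟩))), ?_, ?_⟩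
        · show n ≤ x.1 + n
          omega
        · show n ≤ x.2 + n
          omega
    rw [dBR, hfil, shiftB, Finset.image_image]
    have : ∀ x ∈ CA, ((fun c : ℕ × ℕ => (c.1 - n, c.2 - n)) ∘ fun c : ℕ × ℕ => (c.1 + n, c.2 + n)) x = id x := by
      intro x hx
      simp only [Function.comp_apply, id_eq]
      rw [Prod.ext_iff]
      constructor
      · show x.1 + n - n = x.1
        omega
      · show x.2 + n - n = x.2
        omega
    rw [Finset.image_congr this, Finset.image_id]
  -- membership in the rook configurations of the block board
  have hsymmNe : ∀ {c c' : ℕ × ℕ}, (c.1 ≠ c'.1 ∧ c.2 ≠ c'.2) → (c'.1 ≠ c.1 ∧ c'.2 ≠ c.2) :=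
    fun h => ⟨Ne.symm h.1, Ne.symm h.2⟩
  have hmain : combine n CB CA MBL MTR ∈ rookConfigs (blockSharp n m B A) (m + n) := by
    rw [mem_rookConfigs]
    refine ⟨?_, ?_, ?_⟩
    · -- subset
      intro c hc
      rcases (memC c).1 hc with h | h | h | ⟨x, hx, he⟩
      · exact mem_blockSharp.2 (Or.inl (hCBsub h))
      · obtain ⟨⟨u1, u2, u3⟩, v1, v2⟩ := hM1mem c h
        exact mem_blockSharp.2 (Or.inr (Or.inr (Or.inl ⟨u1, u2, v1⟩)))
      · obtain ⟨⟨u1, u2⟩, v1, v2, v3⟩ := hM2mem c h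
        exact mem_blockSharp.2 (Or.inr (Or.inl ⟨u1, v1, v2⟩))
      · exact mem_blockSharp.2 (Or.inr (Or.inr (Or.inr ⟨x, hCAsub hx, he⟩)))
    · -- cardinality
      have d1 : Disjoint CB MBL := by
        rw [Finset.disjoint_left]
        intro a ha ha'
        have := (hCBg a ha).1
        have := (hM1mem a ha').1.1
        omega
      have d2 : Disjoint (CB ∪ MBL) MTR := by
        rw [Finset.disjoint_left]
        intro a ha ha'
        have h2 := (hM2mem a ha').2.1
        rcases Finset.mem_union.1 ha with h | h
        · have := (hCBg a h).2
          omega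
        · have := (hM1mem a h).2.1
          omega
      have d3 : Disjoint (CB ∪ MBL ∪ MTR) (shiftB n CA) := by
        rw [Finset.disjoint_left]
        intro a ha ha'
        rw [shiftB, Finset.mem_image] at ha'
        obtain ⟨x, hx, rfl⟩ := ha'
        rcases Finset.mem_union.1 ha with h | h
        · rcases Finset.mem_union.1 h with h' | h'
          · have := (hCBg _ h').1
            have : (x.1 + n, x.2 + n).1 = x.1 + n := rfl
            omega
          · have := (hM1mem _ h').2.1
            have : (x.1 + n, x.2 + n).2 = x.2 + n := rfl
            omega
        · have := (hM2mem _ h).1.1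
          have : (x.1 + n, x.2 + n).1 = x.1 + n := rfl
          omega
      have hshiftcard : (shiftB n CA).card = m - i := by
        rw [shiftB, Finset.card_image_of_injective _ ?_, hcardA]
        intro x y h
        obtain ⟨e1, e2⟩ := Prod.mk.inj h
        rw [Prod.ext_iff]
        omega
      rw [combine, Finset.card_union_of_disjoint d3, Finset.card_union_of_disjoint d2,
        Finset.card_union_of_disjoint d1, hcardB, hshiftcard, hcardM1, hcfR, hcardM2, hcfRB]
      omega
    · -- non-attacking
      intro c hc c' hc' hne
      rcases (memC c).1 hc with h | h | h | ⟨x, hx, hxe⟩ <;>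
        rcases (memC c').1 hc' with h' | h' | h' | ⟨x', hx', hxe'⟩
      · exact hnaB c h c' h' hne
      · refine ⟨?_, fun he => (hM1mem c' h').2.2 c h he⟩
        have := (hCBg c h).1
        have := (hM1mem c' h').1.1
        omega
      · refine ⟨fun he => (hM2mem c' h').1.2 c h he, ?_⟩
        have := (hCBg c h).2
        have := (hM2mem c' h').2.1
        omega
      · rw [← hxe']
        have := (hCBg c h).1
        have := (hCBg c h).2
        exact ⟨by show c.1 ≠ x'.1 + n; omega, by show c.2 ≠ x'.2 + n; omega⟩
      · apply hsymmNe
        refine ⟨?_, fun he => (hM1mem c h).2.2 c' h' he⟩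
        have := (hCBg c' h').1
        have := (hM1mem c h).1.1
        omega
      · constructor
        · intro he
          exact hne (hrowM1 c h c' h' he)
        · intro he
          exact hne (hcolM1 c h c' h' he)
      · have := (hM1mem c h).1.1
        have := (hM1mem c h).2.1
        have := (hM2mem c' h').1.1
        have := (hM2mem c' h').2.1
        omega
      · rw [← hxe']
        refine ⟨fun he => (hM1mem c h).1.2.2 x' hx' he.symm, ?_⟩
        have := (hM1mem c h).2.1
        show c.2 ≠ x'.2 + n
        omega
      · apply hsymmNe
        refine ⟨fun he => (hM2mem c h).1.2 c' h' he, ?_⟩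
        have := (hCBg c' h').2
        have := (hM2mem c h).2.1
        omega
      · apply hsymmNe
        have := (hM1mem c' h').1.1
        have := (hM1mem c' h').2.1
        have := (hM2mem c h).1.1
        have := (hM2mem c h).2.1
        omega
      · constructor
        · intro he
          exact hne (hrowM2 c h c' h' he)
        · intro he
          exact hne (hcolM2 c h c' h' he)
      · rw [← hxe']
        refine ⟨?_, fun he => (hM2mem c h).2.2.2 x' hx' he.symm⟩
        have := (hM2mem c h).1.1
        show c.1 ≠ x'.1 + n
        omega
      · apply hsymmNe
        rw [← hxe]
        have := (hCBg c' h').1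
        have := (hCBg c' h').2
        exact ⟨by show c'.1 ≠ x.1 + n; omega, by show c'.2 ≠ x.2 + n; omega⟩
      · apply hsymmNe
        rw [← hxe]
        refine ⟨fun he => (hM1mem c' h').1.2.2 x hx he.symm, ?_⟩
        have := (hM1mem c' h').2.1
        show c'.2 ≠ x.2 + n
        omega
      · apply hsymmNe
        rw [← hxe]
        refine ⟨?_, fun he => (hM2mem c' h').2.2.2 x hx he.symm⟩
        have := (hM2mem c' h').1.1
        show c'.1 ≠ x.1 + n
        omega
      · rw [← hxe, ← hxe']
        have hxx : x ≠ x' := by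
          intro h
          rw [← hxe, ← hxe', h] at hne
          exact hne rfl
        have := hnaA x hx x' hx' hxx
        exact ⟨by show x.1 + n ≠ x'.1 + n; omega, by show x.2 + n ≠ x'.2 + n; omega⟩
  refine ⟨hmain, h1, h2, h3, h4, ?_⟩
  rw [h2, hcardM1, hcfR]

end QRB
namespace QRB

open Finset in
/-- The inner sum over matchings, for fixed configurations `CA`, `CB`. -/
lemma inner_sum {m n i : ℕ} {A B CA CB : Board}
    (hAg : ∀ c ∈ A, c.1 < m ∧ c.2 < m) (hBg : ∀ c ∈ B, c.1 < n ∧ c.2 < n)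
    (him : i ≤ m) (hin : i ≤ n)
    (hCA : CA ∈ rookConfigs A (m - i)) (hCB : CB ∈ rookConfigs B (n - i)) :
    ∑ y ∈ matchings ((freeR m CA).image (· + n)) (freeC n CB)
        ×ˢ matchings (freeR n CB) ((freeC m CA).image (· + n)),
      (RatFunc.X : RatFunc ℚ) ^ invStat (m + n) (m + n) (combine n CB CA y.1 y.2)
    = (RatFunc.X : RatFunc ℚ) ^ invStat m m CA
        * (RatFunc.X : RatFunc ℚ) ^ invStat n n (rot180 n n CB)
        * (qFact (RatFunc.X : RatFunc ℚ) i * qFact (RatFunc.X : RatFunc ℚ) i)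
        * (RatFunc.X : RatFunc ℚ) ^ (-(i : ℤ) ^ 2) := by
  classical
  set q : RatFunc ℚ := RatFunc.X with hqdef
  have hq0 : q ≠ 0 := RatFunc.X_ne_zero
  obtain ⟨hCAsub, hcardA, hnaA⟩ := mem_rookConfigs.1 hCA
  obtain ⟨hCBsub, hcardB, hnaB⟩ := mem_rookConfigs.1 hCB
  have hCAg : ∀ c ∈ CA, c.1 < m ∧ c.2 < m := fun c hc => hAg c (hCAsub hc)
  have hCBg : ∀ c ∈ CB, c.1 < n ∧ c.2 < n := fun c hc => hBg c (hCBsub hc)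
  have hrowA := rowInj hnaA
  have hcolA := colInj hnaA
  have hrowB := rowInj hnaB
  have hcolB := colInj hnaB
  have haddinj : Function.Injective (· + n : ℕ → ℕ) := add_left_injective n
  have hcfR : ((freeR m CA).image (· + n)).card = i := by
    rw [Finset.card_image_of_injective _ haddinj,
      freeR_card (fun c hc => (hCAg c hc).1) hrowA hcardA him]
  have hcfC : (freeC n CB).card = i :=
    freeC_card (fun c hc => (hCBg c hc).2) hcolB hcardB hin
  have hcfRB : (freeR n CB).card = i :=
    freeR_card (fun c hc => (hCBg c hc).1) hrowB hcardB hin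
  have hcfCA : ((freeC m CA).image (· + n)).card = i := by
    rw [Finset.card_image_of_injective _ haddinj,
      freeC_card (fun c hc => (hCAg c hc).2) hcolA hcardA him]
  have hrot := invStat_rot hCBg hrowB hcolB hcardB hin
  have hterm : ∀ MBL ∈ matchings ((freeR m CA).image (· + n)) (freeC n CB),
      ∀ MTR ∈ matchings (freeR n CB) ((freeC m CA).image (· + n)),
      q ^ invStat (m + n) (m + n) (combine n CB CA MBL MTR)
        = (q ^ invStat m m CA * q ^ invStat n n (rot180 n n CB) * q ^ (-(i : ℤ) ^ 2)
            * q ^ invM MBL) * q ^ invM MTR := by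
    intro MBL hM1 MTR hM2
    have hcomb := invStat_combine hCAg hCBg hrowB hcolB hrowA hcolA hcardA hcardB
      him hin hM1 hM2
    have heq : invStat (m + n) (m + n) (combine n CB CA MBL MTR) + i * i
        = invStat m m CA + invStat n n (rot180 n n CB) + invM MBL + invM MTR := by
      omega
    have hpow : q ^ invStat (m + n) (m + n) (combine n CB CA MBL MTR) * q ^ (i * i)
        = q ^ invStat m m CA * q ^ invStat n n (rot180 n n CB)
          * q ^ invM MBL * q ^ invM MTR := by
      rw [← pow_add, heq, pow_add, pow_add, pow_add]
    have hz : q ^ (-(i : ℤ) ^ 2) * q ^ (i * i) = 1 := by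
      rw [← zpow_natCast q (i * i), ← zpow_add₀ hq0]
      have he : (-(i : ℤ) ^ 2) + ((i * i : ℕ) : ℤ) = 0 := by
        push_cast
        ring
      rw [he, zpow_zero]
    calc q ^ invStat (m + n) (m + n) (combine n CB CA MBL MTR)
        = q ^ invStat (m + n) (m + n) (combine n CB CA MBL MTR)
            * (q ^ (-(i : ℤ) ^ 2) * q ^ (i * i)) := by rw [hz, mul_one]
      _ = (q ^ invStat (m + n) (m + n) (combine n CB CA MBL MTR) * q ^ (i * i))
            * q ^ (-(i : ℤ) ^ 2) := by ring
      _ = _ := by rw [hpow]; ring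
  rw [Finset.sum_product]
  calc ∑ MBL ∈ matchings ((freeR m CA).image (· + n)) (freeC n CB),
        ∑ MTR ∈ matchings (freeR n CB) ((freeC m CA).image (· + n)),
          q ^ invStat (m + n) (m + n) (combine n CB CA MBL MTR)
      = ∑ MBL ∈ matchings ((freeR m CA).image (· + n)) (freeC n CB),
          ((q ^ invStat m m CA * q ^ invStat n n (rot180 n n CB) * q ^ (-(i : ℤ) ^ 2)
            * q ^ invM MBL) * qFact q i) := by
        apply Finset.sum_congr rfl
        intro MBL hM1
        rw [Finset.sum_congr rfl (hterm MBL hM1), ← Finset.mul_sum,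
          sum_matchings q i _ _ hcfRB hcfCA]
    _ = (∑ MBL ∈ matchings ((freeR m CA).image (· + n)) (freeC n CB),
          (q ^ invStat m m CA * q ^ invStat n n (rot180 n n CB) * q ^ (-(i : ℤ) ^ 2)
            * q ^ invM MBL)) * qFact q i := by
        rw [Finset.sum_mul]
    _ = ((q ^ invStat m m CA * q ^ invStat n n (rot180 n n CB) * q ^ (-(i : ℤ) ^ 2))
          * qFact q i) * qFact q i := by
        rw [← Finset.mul_sum, sum_matchings q i _ _ hcfR hcfC]
    _ = _ := by ring

end QRB
open Finset QRB in
/-- For an `m × m` board `A` and an `n × n` board `B`,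
`R_{m+n}^{B#A}(q) = Σ_{i=0}^{min(m,n)} R_{m-i}^A(q) · R_{n-i}^{B^↻}(q) · ([i]!_q)² · q^{-i²}`. -/
theorem qRook_blockSharp (m n : ℕ) (A B : Board) (hA : A ⊆ grid m m) (hB : B ⊆ grid n n) :
    qRook (RatFunc.X : RatFunc ℚ) (m + n) (m + n) (blockSharp n m B A) (m + n) =
      ∑ i ∈ Finset.range (min m n + 1),
        qRook (RatFunc.X : RatFunc ℚ) m m A (m - i) *
          qRook (RatFunc.X : RatFunc ℚ) n n (rot180 n n B) (n - i) *
          qFact (RatFunc.X : RatFunc ℚ) i ^ 2 * (RatFunc.X : RatFunc ℚ) ^ (-(i : ℤ) ^ 2) := by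
  classical
  set q : RatFunc ℚ := RatFunc.X with hqdef
  have hAg : ∀ c ∈ A, c.1 < m ∧ c.2 < m := by
    intro c hc
    have h := hA hc
    simp only [grid, Finset.mem_product, Finset.mem_range] at h
    exact h
  have hBg : ∀ c ∈ B, c.1 < n ∧ c.2 < n := by
    intro c hc
    have h := hB hc
    simp only [grid, Finset.mem_product, Finset.mem_range] at h
    exact h
  have hmap : ∀ C ∈ rookConfigs (blockSharp n m B A) (m + n),
      (dBL n C).card ∈ Finset.range (min m n + 1) := by
    intro C hC
    obtain ⟨h1, h2, -⟩ := decompose hAg hBg hC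
    rw [Finset.mem_range]
    omega
  rw [qRook, ← Finset.sum_fiberwise_of_maps_to hmap
    (fun C => q ^ invStat (m + n) (m + n) C)]
  apply Finset.sum_congr rfl
  intro i hi
  rw [Finset.mem_range] at hi
  have him : i ≤ m := by omega
  have hin : i ≤ n := by omega
  have hbij : ∑ C ∈ (rookConfigs (blockSharp n m B A) (m + n)).filter
        (fun C => (dBL n C).card = i), q ^ invStat (m + n) (m + n) C
      = ∑ x ∈ (rookConfigs A (m - i) ×ˢ rookConfigs B (n - i)).sigma
          (fun p => matchings ((freeR m p.1).image (· + n)) (freeC n p.2)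
            ×ˢ matchings (freeR n p.2) ((freeC m p.1).image (· + n))),
          q ^ invStat (m + n) (m + n) (combine n x.1.2 x.1.1 x.2.1 x.2.2) := by
    refine Finset.sum_bij' (fun C _ => ⟨(dBR n C, dTL n C), (dBL n C, dTR n C)⟩)
      (fun x _ => combine n x.1.2 x.1.1 x.2.1 x.2.2) ?hi ?hj ?left ?right ?hval
    case hi =>
      intro C hC
      rw [Finset.mem_filter] at hC
      obtain ⟨hC1, hC2⟩ := hC
      obtain ⟨h1, h2, hbr, htl, hm1, hm2, hcomb⟩ := decompose hAg hBg hC1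
      rw [hC2] at hbr htl
      rw [Finset.mem_sigma, Finset.mem_product]
      exact ⟨⟨hbr, htl⟩, Finset.mem_product.2 ⟨hm1, hm2⟩⟩
    case hj =>
      rintro ⟨⟨CA, CB⟩, M1, M2⟩ hx
      rw [Finset.mem_sigma, Finset.mem_product] at hx
      obtain ⟨⟨hCA', hCB'⟩, hM⟩ := hx
      rw [Finset.mem_product] at hM
      obtain ⟨hmain, -, -, -, -, hcard⟩ := recombine hAg hBg him hin hCA' hCB' hM.1 hM.2
      rw [Finset.mem_filter]
      exact ⟨hmain, hcard⟩
    case left =>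
      intro C hC
      rw [Finset.mem_filter] at hC
      obtain ⟨-, -, -, -, -, -, hcomb⟩ := decompose hAg hBg hC.1
      exact hcomb
    case right =>
      rintro ⟨⟨CA, CB⟩, M1, M2⟩ hx
      rw [Finset.mem_sigma, Finset.mem_product] at hx
      obtain ⟨⟨hCA', hCB'⟩, hM⟩ := hx
      rw [Finset.mem_product] at hM
      obtain ⟨-, h1, h2, h3, h4, -⟩ := recombine hAg hBg him hin hCA' hCB' hM.1 hM.2
      show (⟨(dBR n (combine n CB CA M1 M2), dTL n (combine n CB CA M1 M2)),
        (dBL n (combine n CB CA M1 M2), dTR n (combine n CB CA M1 M2))⟩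
          : Σ _ : Board × Board, Board × Board) = ⟨(CA, CB), (M1, M2)⟩
      rw [h1, h2, h3, h4]
    case hval =>
      intro C hC
      rw [Finset.mem_filter] at hC
      obtain ⟨-, -, -, -, -, -, hcomb⟩ := decompose hAg hBg hC.1
      exact congrArg (fun t => q ^ invStat (m + n) (m + n) t) hcomb.symm
  rw [hbij, Finset.sum_sigma, Finset.sum_product]
  have hrotsum : ∑ CB ∈ rookConfigs B (n - i), q ^ invStat n n (rot180 n n CB)
      = qRook q n n (rot180 n n B) (n - i) := by
    rw [qRook]
    exact sum_rot q hBg (n - i) (fun D => q ^ invStat n n D)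
  have hstep1 : ∀ CA ∈ rookConfigs A (m - i),
      (∑ CB ∈ rookConfigs B (n - i),
        ∑ y ∈ matchings ((freeR m CA).image (· + n)) (freeC n CB)
            ×ˢ matchings (freeR n CB) ((freeC m CA).image (· + n)),
          q ^ invStat (m + n) (m + n) (combine n CB CA y.1 y.2))
      = q ^ invStat m m CA * (qRook q n n (rot180 n n B) (n - i)
          * (qFact q i * qFact q i) * q ^ (-(i : ℤ) ^ 2)) := by
    intro CA hCA'
    have h1 : ∀ CB ∈ rookConfigs B (n - i),
        (∑ y ∈ matchings ((freeR m CA).image (· + n)) (freeC n CB)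
            ×ˢ matchings (freeR n CB) ((freeC m CA).image (· + n)),
          q ^ invStat (m + n) (m + n) (combine n CB CA y.1 y.2))
        = q ^ invStat n n (rot180 n n CB)
            * (q ^ invStat m m CA * (qFact q i * qFact q i) * q ^ (-(i : ℤ) ^ 2)) := by
      intro CB hCB'
      rw [inner_sum hAg hBg him hin hCA' hCB']
      ring
    rw [Finset.sum_congr rfl h1, ← Finset.sum_mul, hrotsum]
    ring
  rw [Finset.sum_congr rfl hstep1, ← Finset.sum_mul, ← qRook]
  ring
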